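/- arXiv:2401.15570 — 5 statements merged into one kernel-verified Lean document; each statement's English description precedes it below -/
import Mathlib

section
/- Given s, s' ∈ (0,∞)^d, i ∈ X, v' > 0 and ε ∈ (0,v'), there exists a sufficiently large R > 0 such that ln α(x,s',i,v') > ln α(x,s,i,v) for all x ∈ (0,∞)^d \ (0,R)^d and all v with 0 < v ≤ v' − ε. -/
open MeasureTheory Real Filter Matrix

noncomputable section

/-- The positive orthant `(0,∞)^d`. -/
def orthant (d : ℕ) : Set (Fin d → ℝ) := Set.univ.pi fun _ => Set.Ioi (0:ℝ)

/-- The ℓ¹ norm `‖s‖₁ = ∑ l |s l|`. -/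
def norm1 {d : ℕ} (s : Fin d → ℝ) : ℝ := ∑ l, |s l|

/-- The diffusion matrix `a(i) = σ(i) σ(i)ᵀ`. -/
def amat {d k : ℕ} (σm : Fin k → Matrix (Fin d) (Fin d) ℝ) (i : Fin k) :
    Matrix (Fin d) (Fin d) ℝ := σm i * (σm i)ᵀ

/-- The lognormal density `α(x,s,i,v)`. -/
def alpha {d k : ℕ} (r : Fin k → ℝ) (σm : Fin k → Matrix (Fin d) (Fin d) ℝ)
    (x s : Fin d → ℝ) (i : Fin k) (v : ℝ) : ℝ :=
  Real.exp (-(1/2 : ℝ) * ∑ l, ∑ l',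
      (v • amat σm i)⁻¹ l l'
        * (Real.log (x l / s l) - (r i - (1/2 : ℝ) * amat σm i l l) * v)
        * (Real.log (x l' / s l') - (r i - (1/2 : ℝ) * amat σm i l' l') * v))
    / (Real.sqrt ((2 * Real.pi) ^ d * (v • amat σm i).det) * ∏ l, x l)

namespace Stmt3Aux

variable {d : ℕ}

/-- Euclidean seminorm of `B *ᵥ z`. -/
def nB (B : Matrix (Fin d) (Fin d) ℝ) (z : Fin d → ℝ) : ℝ :=
  Real.sqrt (∑ l, ((B *ᵥ z) l)^2)

lemma sum_sq_nonneg (B : Matrix (Fin d) (Fin d) ℝ) (z : Fin d → ℝ) :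
    0 ≤ ∑ l, ((B *ᵥ z) l)^2 := Finset.sum_nonneg fun _ _ => sq_nonneg _

lemma nB_nonneg (B : Matrix (Fin d) (Fin d) ℝ) (z : Fin d → ℝ) : 0 ≤ nB B z :=
  Real.sqrt_nonneg _

lemma nB_sq (B : Matrix (Fin d) (Fin d) ℝ) (z : Fin d → ℝ) :
    (nB B z)^2 = ∑ l, ((B *ᵥ z) l)^2 :=
  Real.sq_sqrt (sum_sq_nonneg B z)

lemma nB_eq_norm (B : Matrix (Fin d) (Fin d) ℝ) (z : Fin d → ℝ) :
    nB B z = ‖(WithLp.equiv 2 (Fin d → ℝ)).symm (B *ᵥ z)‖ := by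
  rw [EuclideanSpace.norm_eq, nB]
  congr 1
  refine Finset.sum_congr rfl fun l _ => ?_
  rw [Real.norm_eq_abs, sq_abs]; rfl

lemma nB_add_le (B : Matrix (Fin d) (Fin d) ℝ) (z w : Fin d → ℝ) :
    nB B (z + w) ≤ nB B z + nB B w := by
  simp only [nB_eq_norm, Matrix.mulVec_add, WithLp.equiv_symm_apply, WithLp.toLp_add]
  exact norm_add_le _ _

lemma nB_smul (B : Matrix (Fin d) (Fin d) ℝ) (t : ℝ) (z : Fin d → ℝ) :
    nB B (t • z) = |t| * nB B z := by
  simp only [nB_eq_norm, Matrix.mulVec_smul, WithLp.equiv_symm_apply, WithLp.toLp_smul]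
  rw [norm_smul, Real.norm_eq_abs]

lemma coord_le_nB (B : Matrix (Fin d) (Fin d) ℝ) (z : Fin d → ℝ) (l : Fin d) :
    |(B *ᵥ z) l| ≤ nB B z := by
  rw [nB, ← Real.sqrt_sq_eq_abs]
  exact Real.sqrt_le_sqrt (Finset.single_le_sum (f := fun l => ((B *ᵥ z) l)^2)
    (fun _ _ => sq_nonneg _) (Finset.mem_univ l))

/-- Lower bound: coordinates of `z` are controlled by `nB A⁻¹ z`. -/
lemma coord_le (A : Matrix (Fin d) (Fin d) ℝ) (hA : IsUnit A.det) (z : Fin d → ℝ) (l : Fin d) :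
    |z l| ≤ ((∑ p, ∑ q, |A p q|) + 1) * nB A⁻¹ z := by
  have hz : A *ᵥ (A⁻¹ *ᵥ z) = z := by
    rw [Matrix.mulVec_mulVec, Matrix.mul_nonsing_inv _ hA, Matrix.one_mulVec]
  have h1 : z l = ∑ q, A l q * (A⁻¹ *ᵥ z) q := by
    conv_lhs => rw [← hz]
    rfl
  calc |z l| = |∑ q, A l q * (A⁻¹ *ᵥ z) q| := by rw [h1]
    _ ≤ ∑ q, |A l q * (A⁻¹ *ᵥ z) q| := Finset.abs_sum_le_sum_abs _ _
    _ = ∑ q, |A l q| * |(A⁻¹ *ᵥ z) q| := by simp [abs_mul]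
    _ ≤ ∑ q, |A l q| * nB A⁻¹ z :=
        Finset.sum_le_sum fun q _ => mul_le_mul_of_nonneg_left (coord_le_nB _ _ _) (abs_nonneg _)
    _ = (∑ q, |A l q|) * nB A⁻¹ z := (Finset.sum_mul _ _ _).symm
    _ ≤ ((∑ p, ∑ q, |A p q|) + 1) * nB A⁻¹ z := by
        refine mul_le_mul_of_nonneg_right ?_ (nB_nonneg _ _)
        have : (∑ q, |A l q|) ≤ ∑ p, ∑ q, |A p q| :=
          Finset.single_le_sum (f := fun p => ∑ q, |A p q|)
            (fun p _ => Finset.sum_nonneg fun q _ => abs_nonneg _) (Finset.mem_univ l)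
        linarith

/-- Quadratic form as a sum of squares. -/
lemma quad_eq (B : Matrix (Fin d) (Fin d) ℝ) (z : Fin d → ℝ) :
    ∑ l, ∑ l', (Bᵀ * B) l l' * z l * z l' = ∑ l, ((B *ᵥ z) l)^2 := by
  have h1 : ∑ l, ((B *ᵥ z) l)^2 = (B *ᵥ z) ⬝ᵥ (B *ᵥ z) := by
    simp [dotProduct, sq]
  have h2 : z ⬝ᵥ ((Bᵀ * B) *ᵥ z) = (B *ᵥ z) ⬝ᵥ (B *ᵥ z) := by
    rw [← Matrix.mulVec_mulVec, Matrix.dotProduct_mulVec, Matrix.vecMul_transpose]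
  rw [h1, ← h2]
  simp only [dotProduct, Matrix.mulVec, Finset.mul_sum]
  exact Finset.sum_congr rfl fun l _ => Finset.sum_congr rfl fun l' _ => by ring

/-- Inverse of `v • a(i)`. -/
lemma inv_smul_amat {k : ℕ} (σm : Fin k → Matrix (Fin d) (Fin d) ℝ) (i : Fin k)
    (h : IsUnit (σm i).det) {v : ℝ} (hv : v ≠ 0) :
    (v • amat σm i)⁻¹ = v⁻¹ • ((σm i)⁻¹ᵀ * (σm i)⁻¹) := by
  apply Matrix.inv_eq_right_inv
  have hT : IsUnit (σm i)ᵀ.det := by rwa [Matrix.det_transpose]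
  rw [Matrix.smul_mul, Matrix.mul_smul, smul_smul, mul_inv_cancel₀ hv, one_smul]
  rw [amat, Matrix.transpose_nonsing_inv]
  calc σm i * (σm i)ᵀ * ((σm i)ᵀ⁻¹ * (σm i)⁻¹)
      = σm i * ((σm i)ᵀ * (σm i)ᵀ⁻¹) * (σm i)⁻¹ := by
        simp only [Matrix.mul_assoc]
    _ = 1 := by
        rw [Matrix.mul_nonsing_inv _ hT, Matrix.mul_one, Matrix.mul_nonsing_inv _ h]

/-- Logarithm of the lognormal density. -/
lemma alpha_log {k : ℕ} (r : Fin k → ℝ) (σm : Fin k → Matrix (Fin d) (Fin d) ℝ)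
    (i : Fin k) (hσ : IsUnit (σm i).det) (x s : Fin d → ℝ) (hx : ∀ l, 0 < x l)
    {v : ℝ} (hv : 0 < v) (z : Fin d → ℝ)
    (hzd : z = fun l => Real.log (x l / s l) - (r i - (1/2 : ℝ) * amat σm i l l) * v) :
    Real.log (alpha r σm x s i v)
      = -(1/2 : ℝ) * (v⁻¹ * ∑ l, (((σm i)⁻¹) *ᵥ z) l ^ 2)
        - ((d:ℝ)/2) * Real.log v - ((d:ℝ)/2) * Real.log (2*Real.pi)
        - (1/2 : ℝ) * Real.log ((amat σm i).det) - ∑ l, Real.log (x l) := by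
  have hπ : (0:ℝ) < 2*Real.pi := by positivity
  have hd0 : (σm i).det ≠ 0 := hσ.ne_zero
  have hdet : (amat σm i).det = (σm i).det ^ 2 := by
    rw [amat, Matrix.det_mul, Matrix.det_transpose, sq]
  have hdetpos : 0 < (amat σm i).det := by rw [hdet]; positivity
  have hdsmul : (v • amat σm i).det = v ^ d * (amat σm i).det := by
    rw [Matrix.det_smul, Fintype.card_fin]
  have hP : 0 < (2*Real.pi)^d * (v • amat σm i).det := by
    rw [hdsmul]; positivity
  have hX : 0 < ∏ l, x l := Finset.prod_pos fun l _ => hx l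
  have hsqrt : 0 < Real.sqrt ((2*Real.pi)^d * (v • amat σm i).det) := Real.sqrt_pos.2 hP
  have hsum : (∑ l, ∑ l', (v • amat σm i)⁻¹ l l'
        * (Real.log (x l / s l) - (r i - (1/2 : ℝ) * amat σm i l l) * v)
        * (Real.log (x l' / s l') - (r i - (1/2:ℝ) * amat σm i l' l') * v))
      = v⁻¹ * ∑ l, (((σm i)⁻¹) *ᵥ z) l ^ 2 := by
    subst hzd
    rw [← quad_eq ((σm i)⁻¹), inv_smul_amat σm i hσ hv.ne', Finset.mul_sum]
    refine Finset.sum_congr rfl fun l _ => ?_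
    rw [Finset.mul_sum]
    refine Finset.sum_congr rfl fun l' _ => ?_
    simp only [Matrix.smul_apply, smul_eq_mul]
    ring
  rw [alpha, Real.log_div (Real.exp_ne_zero _) (by positivity),
    Real.log_exp, Real.log_mul hsqrt.ne' hX.ne',
    Real.log_sqrt hP.le, Real.log_prod (fun l _ => (hx l).ne'),
    Real.log_mul (by positivity) (by rw [hdsmul]; positivity), hdsmul,
    Real.log_mul (by positivity) hdetpos.ne', Real.log_pow, Real.log_pow, hsum]
  ring

/-- The key elementary inequality: for large `q`,
`(q+c)²/(2v') + L < (q² - D)/(2·ve)` whenever `0 < ve < v'`. -/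
lemma key (D c v' ve L : ℝ) (hv' : 0 < v') (hve : 0 < ve) (hvev : ve < v') (hc : 0 ≤ c) :
    ∃ q₀ : ℝ, 1 ≤ q₀ ∧ ∀ q : ℝ, q₀ ≤ q →
      (q + c)^2/(2*v') + L < (q^2 - D)/(2*ve) := by
  set δ : ℝ := 1/(2*ve) - 1/(2*v') with hδdef
  have hδ : 0 < δ := by
    have h1 : 1/(2*v') < 1/(2*ve) := by
      apply one_div_lt_one_div_of_lt <;> linarith
    simp only [hδdef]; linarith
  set K : ℝ := c^2/(2*v') + L + D/(2*ve) with hK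
  clear_value δ K
  refine ⟨max 1 ((c/v' + |K| + 1)/δ), le_max_left _ _, fun q hq => ?_⟩
  have hq1 : (1:ℝ) ≤ q := le_trans (le_max_left _ _) hq
  have h5 : c/v' + |K| + 1 ≤ δ * q := by
    have h6 : (c/v' + |K| + 1)/δ ≤ q := le_trans (le_max_right _ _) hq
    calc c/v' + |K| + 1 = ((c/v' + |K| + 1)/δ) * δ := (div_mul_cancel₀ _ hδ.ne').symm
      _ ≤ q * δ := mul_le_mul_of_nonneg_right h6 hδ.le
      _ = δ * q := mul_comm _ _
  have hcv : 0 ≤ c/v' := by positivity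
  have hKabs : K ≤ |K| := le_abs_self K
  have hq0 : (0:ℝ) ≤ q := by linarith
  have hmain : c/v' * q + K < δ * q^2 := by
    nlinarith [mul_le_mul_of_nonneg_right h5 hq0, mul_nonneg (abs_nonneg K) (by linarith : (0:ℝ) ≤ q - 1)]
  have hid : (q^2 - D)/(2*ve) - ((q + c)^2/(2*v') + L) = δ*q^2 - (c/v'*q + K) := by
    simp only [hδdef, hK]
    field_simp
    ring
  linarith

end Stmt3Aux

theorem stmt_3 (d k : ℕ) (hd : 1 ≤ d) (hk : 0 < k)
    (r : Fin k → ℝ) (hr : ∀ i, 0 ≤ r i)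
    (σm : Fin k → Matrix (Fin d) (Fin d) ℝ) (hσ : ∀ i, IsUnit (σm i).det)
    (s s' : Fin d → ℝ) (hs : s ∈ orthant d) (hs' : s' ∈ orthant d)
    (i : Fin k) (v' ε : ℝ) (hv' : 0 < v') (hε : 0 < ε) (hεv : ε < v') :
    ∃ R : ℝ, 0 < R ∧
      ∀ x ∈ orthant d \ Set.univ.pi (fun _ => Set.Ioo (0:ℝ) R),
        ∀ v : ℝ, 0 < v → v ≤ v' - ε →
          Real.log (alpha r σm x s i v) < Real.log (alpha r σm x s' i v') := by
  classical
  have hs0 : ∀ l, 0 < s l := fun l => hs l (Set.mem_univ l)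
  have hs'0 : ∀ l, 0 < s' l := fun l => hs' l (Set.mem_univ l)
  have hveps : 0 < v' - ε := by linarith
  set μ : Fin d → ℝ := fun l => r i - (1/2:ℝ) * amat σm i l l with hμ
  set w0 : Fin d → ℝ := fun l => Real.log (s l) - Real.log (s' l) with hw0
  set c : ℝ := Stmt3Aux.nB ((σm i)⁻¹) w0 + v' * Stmt3Aux.nB ((σm i)⁻¹) μ with hc
  have hc0 : 0 ≤ c := by
    have h1 := Stmt3Aux.nB_nonneg ((σm i)⁻¹) w0
    have h2 := Stmt3Aux.nB_nonneg ((σm i)⁻¹) μ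
    rw [hc]; exact add_nonneg h1 (mul_nonneg hv'.le h2)
  obtain ⟨q₀, hq₀1, hkey⟩ := Stmt3Aux.key (d:ℝ) c v' (v' - ε) (((d:ℝ)/2) * Real.log v')
    hv' hveps (by linarith) hc0
  set q₁ : ℝ := max q₀ (Real.sqrt d) with hq₁
  set C : ℝ := (∑ p, ∑ q, |σm i p q|) + 1 with hC
  have hCpos : 0 < C := by
    have h1 : 0 ≤ ∑ p, ∑ q, |σm i p q| :=
      Finset.sum_nonneg fun p _ => Finset.sum_nonneg fun q _ => abs_nonneg _
    rw [hC]; linarith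
  set S : ℝ := ∑ l, (|Real.log (s l)| + |μ l| * v') with hS
  clear_value c q₁ C S
  refine ⟨Real.exp (C * q₁ + S + 1), Real.exp_pos _, ?_⟩
  rintro x ⟨hxo, hxn⟩ v hv hvle
  have hx0 : ∀ l, 0 < x l := fun l => hxo l (Set.mem_univ l)
  have hvv' : v < v' := by linarith only [hvle, hε]
  have hex : ∃ l, Real.exp (C * q₁ + S + 1) ≤ x l := by
    by_contra h
    push_neg at h
    exact hxn fun l _ => ⟨hx0 l, h l⟩
  obtain ⟨l₀, hRx⟩ := hex
  set z : Fin d → ℝ := fun l => Real.log (x l / s l) - (r i - (1/2:ℝ) * amat σm i l l) * v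
    with hz
  set z' : Fin d → ℝ := fun l => Real.log (x l / s' l) - (r i - (1/2:ℝ) * amat σm i l l) * v'
    with hz'
  set q : ℝ := Stmt3Aux.nB ((σm i)⁻¹) z with hqdef
  set q' : ℝ := Stmt3Aux.nB ((σm i)⁻¹) z' with hq'def
  clear_value μ w0 z z' q q'
  have hq0 : 0 ≤ q := by rw [hqdef]; exact Stmt3Aux.nB_nonneg _ _
  have hq'0 : 0 ≤ q' := by rw [hq'def]; exact Stmt3Aux.nB_nonneg _ _
  -- relation between z' and z
  have hzrel : z' = z + (w0 + (v - v') • μ) := by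
    funext l
    simp only [hz, hz', hw0, hμ, Pi.add_apply, Pi.smul_apply, smul_eq_mul]
    rw [Real.log_div (hx0 l).ne' (hs0 l).ne', Real.log_div (hx0 l).ne' (hs'0 l).ne']
    ring
  have hq'le : q' ≤ q + c := by
    rw [hq'def, hzrel]
    have t1 := Stmt3Aux.nB_add_le ((σm i)⁻¹) z (w0 + (v - v') • μ)
    have t2 := Stmt3Aux.nB_add_le ((σm i)⁻¹) w0 ((v - v') • μ)
    have t3 := Stmt3Aux.nB_smul ((σm i)⁻¹) (v - v') μ
    have h1 : |v - v'| ≤ v' := by rw [abs_of_nonpos (by linarith)]; linarith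
    have h2 := Stmt3Aux.nB_nonneg ((σm i)⁻¹) μ
    have h3 : |v - v'| * Stmt3Aux.nB ((σm i)⁻¹) μ ≤ v' * Stmt3Aux.nB ((σm i)⁻¹) μ :=
      mul_le_mul_of_nonneg_right h1 h2
    linarith only [t1, t2, t3, h3, hqdef, hc]
  -- lower bound on q
  have hS1 : |Real.log (s l₀)| + |μ l₀| * v ≤ S := by
    have hterm : |Real.log (s l₀)| + |μ l₀| * v ≤ |Real.log (s l₀)| + |μ l₀| * v' := by
      have h5 : |μ l₀| * v ≤ |μ l₀| * v' :=
        mul_le_mul_of_nonneg_left (by linarith only [hvv']) (abs_nonneg _)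
      linarith only [h5]
    refine hterm.trans ?_
    rw [hS]
    exact Finset.single_le_sum (f := fun l => |Real.log (s l)| + |μ l| * v')
      (fun l _ => by positivity) (Finset.mem_univ l₀)
  have hzl₀ : C * q₁ + 1 ≤ |z l₀| := by
    have hlogx : C * q₁ + S + 1 ≤ Real.log (x l₀) := by
      have h6 := Real.log_le_log (Real.exp_pos _) hRx
      rwa [Real.log_exp] at h6
    have hzeq : z l₀ = Real.log (x l₀) - (Real.log (s l₀) + μ l₀ * v) := by
      simp only [hz, hμ]
      rw [Real.log_div (hx0 l₀).ne' (hs0 l₀).ne']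
      ring
    have habs : |Real.log (s l₀) + μ l₀ * v| ≤ S := by
      refine (abs_add_le _ _).trans ?_
      rw [abs_mul, abs_of_pos hv]
      exact hS1
    calc C * q₁ + 1 = (C * q₁ + S + 1) - S := by ring
      _ ≤ Real.log (x l₀) - |Real.log (s l₀) + μ l₀ * v| := by linarith only [hlogx, habs]
      _ ≤ |z l₀| := by
          rw [hzeq]
          have h7 := abs_sub_abs_le_abs_sub (Real.log (x l₀)) (Real.log (s l₀) + μ l₀ * v)
          have h8 := le_abs_self (Real.log (x l₀))
          linarith only [h7, h8]
  have hq₁q : q₁ < q := by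
    have hcoord := Stmt3Aux.coord_le (σm i) (hσ i) z l₀
    rw [← hC, ← hqdef] at hcoord
    have h8 : C * q₁ < C * q := by linarith only [hcoord, hzl₀]
    exact (mul_lt_mul_iff_right₀ hCpos).mp h8
  have hq₀q : q₀ ≤ q := le_trans (by rw [hq₁]; exact le_max_left _ _) hq₁q.le
  have hdq : (d:ℝ) ≤ q^2 := by
    have h1 : Real.sqrt d ≤ q :=
      le_trans (by rw [hq₁]; exact le_max_right _ _) hq₁q.le
    calc (d:ℝ) = (Real.sqrt (d:ℝ))^2 := (Real.sq_sqrt (by positivity)).symm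
      _ ≤ q^2 := pow_le_pow_left₀ (Real.sqrt_nonneg _) h1 2
  have hkq := hkey q hq₀q
  -- rewrite both sides of the goal
  rw [Stmt3Aux.alpha_log r σm i (hσ i) x s hx0 hv z hz,
      Stmt3Aux.alpha_log r σm i (hσ i) x s' hx0 hv' z' hz']
  have hQz : (∑ l, (((σm i)⁻¹) *ᵥ z) l ^ 2) = q^2 := by
    rw [hqdef]; exact (Stmt3Aux.nB_sq _ _).symm
  have hQz' : (∑ l, (((σm i)⁻¹) *ᵥ z') l ^ 2) = q'^2 := by
    rw [hq'def]; exact (Stmt3Aux.nB_sq _ _).symm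
  rw [hQz, hQz']
  -- chain of inequalities
  have hlogv : -Real.log v ≤ v⁻¹ := by
    have h := Real.log_le_sub_one_of_pos (inv_pos.2 hv)
    rw [Real.log_inv] at h; linarith only [h]
  have e1 : -((q^2 - (d:ℝ))/(2*v)) = -(1/2 : ℝ) * (v⁻¹ * q^2) + ((d:ℝ)/2) * v⁻¹ := by
    field_simp
    ring
  have a1 : -(1/2 : ℝ) * (v⁻¹ * q^2) - ((d:ℝ)/2)*Real.log v ≤ -((q^2 - (d:ℝ))/(2*v)) := by
    have h2 : ((d:ℝ)/2) * (-Real.log v) ≤ ((d:ℝ)/2) * v⁻¹ :=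
      mul_le_mul_of_nonneg_left hlogv (by positivity)
    linarith only [e1, h2]
  have a2 : -((q^2 - (d:ℝ))/(2*v)) ≤ -((q^2 - (d:ℝ))/(2*(v'-ε))) := by
    have h3 : (q^2 - (d:ℝ))/(2*(v'-ε)) ≤ (q^2 - (d:ℝ))/(2*v) :=
      div_le_div_of_nonneg_left (by linarith only [hdq]) (by linarith only [hv])
        (by linarith only [hvle])
    linarith only [h3]
  have a3 : -((q + c)^2/(2*v')) ≤ -(1/2 : ℝ) * (v'⁻¹ * q'^2) := by
    have h4 : q'^2 ≤ (q + c)^2 := pow_le_pow_left₀ hq'0 hq'le 2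
    have e2 : (q+c)^2/(2*v') = (1/2 : ℝ) * (v'⁻¹ * (q+c)^2) := by
      field_simp
    have h5 : (1/2 : ℝ) * (v'⁻¹ * q'^2) ≤ (1/2 : ℝ)*(v'⁻¹*(q+c)^2) := by
      have h6 : (0:ℝ) ≤ v'⁻¹ := by positivity
      have h7 := mul_le_mul_of_nonneg_left h4 h6
      linarith only [h7]
    linarith only [e2, h5]
  linarith only [hkq, a1, a2, a3]
end
end

section
/- Let φ ∈ V be the solution of the integral equation (IE). Then for every t ∈ (0,T), s ∈ (0,∞)^d and j, j' ∈ X, lim_{u↓0} ∫_{(0,∞)^d} φ(t+u,x,j) α(x,s,j',u) dx = φ(t,s,j). -/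
open MeasureTheory Real Filter Matrix

noncomputable section

/-- Membership in the space `V`: continuity on `(0,T)×(0,∞)^d×X` together with
at most linear growth in the space variable. -/
def MemV {d k : ℕ} (T : ℝ) (φ : ℝ → (Fin d → ℝ) → Fin k → ℝ) : Prop :=
  (∀ i : Fin k, ContinuousOn (fun p : ℝ × (Fin d → ℝ) => φ p.1 p.2 i)
      (Set.Ioo 0 T ×ˢ orthant d)) ∧
  ∃ M : ℝ, ∀ t ∈ Set.Ioo (0:ℝ) T, ∀ s ∈ orthant d, ∀ i : Fin k,
      |φ t s i| ≤ M * (1 + norm1 s)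

/-- The weighted sup-norm `‖φ‖_V = sup |φ(t,s,i)|/(1+‖s‖₁)`. -/
def Vnorm {d k : ℕ} (T : ℝ) (φ : ℝ → (Fin d → ℝ) → Fin k → ℝ) : ℝ :=
  sSup {y : ℝ | ∃ t ∈ Set.Ioo (0:ℝ) T, ∃ s ∈ orthant d, ∃ i : Fin k,
      y = |φ t s i| / (1 + norm1 s)}

/-- The Black–Scholes–Merton type solution `η_i(t,s)`. -/
def eta {d k : ℕ} (r : Fin k → ℝ) (σm : Fin k → Matrix (Fin d) (Fin d) ℝ)
    (K : (Fin d → ℝ) → ℝ) (T : ℝ) (i : Fin k) (t : ℝ) (s : Fin d → ℝ) : ℝ :=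
  if t < T then
    Real.exp (-(r i) * (T - t)) * ∫ x in orthant d, K x * alpha r σm x s i (T - t)
  else K s

/-- The operator `𝒜` from the integral equation. -/
def Aop {d k : ℕ} (r : Fin k → ℝ) (σm : Fin k → Matrix (Fin d) (Fin d) ℝ)
    (Λ : Fin k → Fin k → ℝ) (K : (Fin d → ℝ) → ℝ) (T : ℝ)
    (φ : ℝ → (Fin d → ℝ) → Fin k → ℝ) (t : ℝ) (s : Fin d → ℝ) (i : Fin k) : ℝ :=
  Real.exp (-(-(Λ i i)) * (T - t)) * eta r σm K T i t s
  + ∫ v in (0:ℝ)..(T - t),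
      Real.exp (-((-(Λ i i)) + r i) * v) *
        ∑ j ∈ Finset.univ.filter (fun j => j ≠ i), Λ i j *
          ∫ x in orthant d, φ (t + v) x j * alpha r σm x s i v

/-- `φ` solves the integral equation (IE) on `(0,T)×(0,∞)^d×X`. -/
def SolvesIE {d k : ℕ} (r : Fin k → ℝ) (σm : Fin k → Matrix (Fin d) (Fin d) ℝ)
    (Λ : Fin k → Fin k → ℝ) (K : (Fin d → ℝ) → ℝ) (T : ℝ)
    (φ : ℝ → (Fin d → ℝ) → Fin k → ℝ) : Prop :=
  ∀ t ∈ Set.Ioo (0:ℝ) T, ∀ s ∈ orthant d, ∀ i : Fin k,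
    φ t s i = Aop r σm Λ K T φ t s i

namespace Stmt6Aux

lemma mem_orthant {d : ℕ} (x : Fin d → ℝ) : x ∈ orthant d ↔ ∀ l, 0 < x l := by
  simp [orthant, Set.mem_pi]

/-- The standard gaussian density on `ℝ^d`, in product form. -/
def gstd (d : ℕ) (z : Fin d → ℝ) : ℝ :=
  ∏ l, (Real.exp (-(z l)^2/2) / Real.sqrt (2*Real.pi))

/-- The change-of-variables map. -/
def Fmap {d : ℕ} (σ : Matrix (Fin d) (Fin d) ℝ) (μv s : Fin d → ℝ) (u : ℝ)
    (z : Fin d → ℝ) : Fin d → ℝ :=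
  fun l => s l * Real.exp (μv l * u + Real.sqrt u * σ.mulVec z l)

/-- The Jacobian matrix of `Fmap`. -/
def Mder {d : ℕ} (σ : Matrix (Fin d) (Fin d) ℝ) (μv s : Fin d → ℝ) (u : ℝ)
    (z : Fin d → ℝ) : Matrix (Fin d) (Fin d) ℝ :=
  Matrix.of fun l m => Fmap σ μv s u z l * (Real.sqrt u * σ l m)

lemma sqrt_pow' {x : ℝ} (hx : 0 ≤ x) (n : ℕ) : Real.sqrt (x ^ n) = Real.sqrt x ^ n := by
  rw [← Real.sqrt_sq (pow_nonneg (Real.sqrt_nonneg x) n), ← pow_mul, mul_comm n 2,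
    pow_mul, Real.sq_sqrt hx]

lemma Fmap_mem {d : ℕ} (σ : Matrix (Fin d) (Fin d) ℝ) (μv s : Fin d → ℝ) (u : ℝ)
    (hs : s ∈ orthant d) (z : Fin d → ℝ) : Fmap σ μv s u z ∈ orthant d := by
  rw [mem_orthant] at hs ⊢
  exact fun l => mul_pos (hs l) (Real.exp_pos _)

lemma image_Fmap {d : ℕ} {σ : Matrix (Fin d) (Fin d) ℝ} (hσ : IsUnit σ.det)
    (μv : Fin d → ℝ) {s : Fin d → ℝ} (hs : s ∈ orthant d) {u : ℝ} (hu : 0 < u) :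
    Fmap σ μv s u '' Set.univ = orthant d := by
  rw [mem_orthant] at hs
  apply Set.eq_of_subset_of_subset
  · rintro x ⟨z, -, rfl⟩
    exact Fmap_mem σ μv s u (by rw [mem_orthant]; exact hs) z
  · intro x hx
    rw [mem_orthant] at hx
    have hsu : Real.sqrt u ≠ 0 := ne_of_gt (Real.sqrt_pos.2 hu)
    refine ⟨(Real.sqrt u)⁻¹ • σ⁻¹.mulVec (fun l => Real.log (x l / s l) - μv l * u),
      Set.mem_univ _, ?_⟩
    funext l
    have hσσ : σ.mulVec (σ⁻¹.mulVec (fun l => Real.log (x l / s l) - μv l * u))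
        = fun l => Real.log (x l / s l) - μv l * u := by
      rw [Matrix.mulVec_mulVec, Matrix.mul_nonsing_inv σ hσ, Matrix.one_mulVec]
    simp only [Fmap, Matrix.mulVec_smul, hσσ, Pi.smul_apply, smul_eq_mul]
    rw [mul_inv_cancel_left₀ hsu]
    rw [add_sub_cancel, Real.exp_log (div_pos (hx l) (hs l)),
      mul_div_cancel₀ _ (ne_of_gt (hs l))]

lemma injOn_Fmap {d : ℕ} {σ : Matrix (Fin d) (Fin d) ℝ} (hσ : IsUnit σ.det)
    (μv : Fin d → ℝ) {s : Fin d → ℝ} (hs : s ∈ orthant d) {u : ℝ} (hu : 0 < u) :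
    Set.InjOn (Fmap σ μv s u) Set.univ := by
  rw [mem_orthant] at hs
  intro z _ z' _ h
  have hE : σ.mulVec z = σ.mulVec z' := by
    funext l
    have hl := congrFun h l
    simp only [Fmap] at hl
    have h2 := mul_left_cancel₀ (ne_of_gt (hs l)) hl
    have h3 := Real.exp_injective h2
    have := add_left_cancel h3
    exact mul_left_cancel₀ (ne_of_gt (Real.sqrt_pos.2 hu)) this
  have := congrArg (fun v => σ⁻¹.mulVec v) hE
  simpa [Matrix.mulVec_mulVec, Matrix.nonsing_inv_mul σ hσ] using this

lemma hasFDerivAt_Fmap {d : ℕ} (σ : Matrix (Fin d) (Fin d) ℝ) (μv s : Fin d → ℝ)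
    (u : ℝ) (z : Fin d → ℝ) :
    HasFDerivAt (Fmap σ μv s u)
      (LinearMap.toContinuousLinearMap (Mder σ μv s u z).mulVecLin) z := by
  apply hasFDerivAt_pi''
  intro l
  set Lc : (Fin d → ℝ) →L[ℝ] ℝ :=
    (ContinuousLinearMap.proj l).comp (LinearMap.toContinuousLinearMap σ.mulVecLin) with hLc
  have hLcz : ∀ v, Lc v = σ.mulVec v l := fun v => rfl
  have hL : HasFDerivAt (fun z : Fin d → ℝ => μv l * u + Real.sqrt u * σ.mulVec z l)
      (Real.sqrt u • Lc) z := by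
    have : HasFDerivAt (fun z : Fin d → ℝ => Real.sqrt u * σ.mulVec z l)
        (Real.sqrt u • Lc) z := by
      exact (Lc.hasFDerivAt (x := z)).const_mul (Real.sqrt u)
    simpa using this.const_add (μv l * u)
  have hexp := hL.exp
  have hfin := hexp.const_mul (s l)
  refine hfin.congr_fderiv ?_
  symm
  apply ContinuousLinearMap.ext
  intro v
  simp only [ContinuousLinearMap.coe_comp', Function.comp_apply,
    LinearMap.coe_toContinuousLinearMap', ContinuousLinearMap.proj_apply,
    ContinuousLinearMap.coe_smul', Pi.smul_apply, smul_eq_mul, hLcz,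
    Matrix.mulVecLin_apply]
  simp only [Mder, Fmap, Matrix.mulVec, dotProduct, Matrix.of_apply]
  simp_rw [Finset.mul_sum]
  exact Finset.sum_congr rfl fun m _ => by ring

/-- Key algebraic identity. -/
lemma alpha_Fmap {d k : ℕ} (r : Fin k → ℝ) (σm : Fin k → Matrix (Fin d) (Fin d) ℝ)
    (j' : Fin k) (hσ : IsUnit (σm j').det) {s : Fin d → ℝ} (hs : s ∈ orthant d)
    {u : ℝ} (hu : 0 < u) (z : Fin d → ℝ) :
    alpha r σm (Fmap (σm j') (fun l => r j' - (1/2 : ℝ) * amat σm j' l l) s u z) s j' u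
      * |(Mder (σm j') (fun l => r j' - (1/2 : ℝ) * amat σm j' l l) s u z).det|
      = gstd d z := by
  have hdpos := Real.sqrt_pos.2 hu
  have hsu : Real.sqrt u * Real.sqrt u = u := Real.mul_self_sqrt hu.le
  rw [mem_orthant] at hs
  set σ := σm j' with hσdef
  set μv : Fin d → ℝ := fun l => r j' - (1/2 : ℝ) * amat σm j' l l with hμv
  set x : Fin d → ℝ := Fmap σ μv s u z with hx
  have hxpos : ∀ l, 0 < x l := fun l => mul_pos (hs l) (Real.exp_pos _)
  have hσT : IsUnit (σᵀ).det := by rwa [Matrix.det_transpose]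
  -- the inverse of u • A
  have hAinv : (u • amat σm j')⁻¹ = u⁻¹ • ((σᵀ)⁻¹ * σ⁻¹) := by
    apply Matrix.inv_eq_right_inv
    rw [Matrix.smul_mul, Matrix.mul_smul, smul_smul, mul_inv_cancel₀ hu.ne']
    rw [amat, hσdef]
    rw [show σ * σᵀ * ((σᵀ)⁻¹ * σ⁻¹) = σ * (σᵀ * (σᵀ)⁻¹) * σ⁻¹ by
      simp only [Matrix.mul_assoc]]
    rw [Matrix.mul_nonsing_inv _ hσT, Matrix.mul_one, Matrix.mul_nonsing_inv _ hσ, one_smul]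
  -- logs
  have hlog : ∀ l, Real.log (x l / s l) - μv l * u = Real.sqrt u * σ.mulVec z l := by
    intro l
    have : x l / s l = Real.exp (μv l * u + Real.sqrt u * σ.mulVec z l) := by
      rw [hx]; simp only [Fmap]; exact mul_div_cancel_left₀ _ (ne_of_gt (hs l))
    rw [this, Real.log_exp, add_sub_cancel_left]
  -- quadratic form
  set w : Fin d → ℝ := fun l => Real.sqrt u * σ.mulVec z l with hw
  have hwsmul : w = Real.sqrt u • σ.mulVec z := rfl
  have hQ : (∑ l, ∑ l',
      (u • amat σm j')⁻¹ l l'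
        * (Real.log (x l / s l) - (r j' - (1/2 : ℝ) * amat σm j' l l) * u)
        * (Real.log (x l' / s l') - (r j' - (1/2 : ℝ) * amat σm j' l' l') * u))
      = ∑ l, (z l)^2 := by
    have h1 : ∀ l, Real.log (x l / s l) - (r j' - (1/2 : ℝ) * amat σm j' l l) * u = w l :=
      fun l => hlog l
    simp_rw [h1, hAinv]
    have hdot : (∑ l, ∑ l', (u⁻¹ • ((σᵀ)⁻¹ * σ⁻¹)) l l' * w l * w l')
        = w ⬝ᵥ ((u⁻¹ • ((σᵀ)⁻¹ * σ⁻¹)).mulVec w) := by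
      simp only [dotProduct, Matrix.mulVec]
      refine Finset.sum_congr rfl fun l _ => ?_
      rw [Finset.mul_sum]
      exact Finset.sum_congr rfl fun l' _ => by ring
    rw [hdot]
    have hmv : (u⁻¹ • ((σᵀ)⁻¹ * σ⁻¹)).mulVec w
        = (u⁻¹ * Real.sqrt u) • (σᵀ)⁻¹.mulVec z := by
      rw [Matrix.smul_mulVec, hwsmul, Matrix.mulVec_smul, Matrix.mulVec_mulVec,
        Matrix.mul_assoc, Matrix.nonsing_inv_mul _ hσ, Matrix.mul_one, smul_smul]
    rw [hmv, dotProduct_smul, hwsmul, smul_dotProduct,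
      ← Matrix.transpose_nonsing_inv, Matrix.dotProduct_mulVec,
      Matrix.vecMul_transpose, Matrix.mulVec_mulVec, Matrix.nonsing_inv_mul _ hσ,
      Matrix.one_mulVec]
    simp only [smul_eq_mul, dotProduct]
    have hS : ∀ S : ℝ, u⁻¹ * Real.sqrt u * (Real.sqrt u * S) = S := by
      intro S
      rw [show u⁻¹ * Real.sqrt u * (Real.sqrt u * S)
          = (Real.sqrt u * Real.sqrt u) * u⁻¹ * S by ring, hsu,
        mul_inv_cancel₀ hu.ne', one_mul]
    rw [hS]
    exact Finset.sum_congr rfl fun l _ => (sq (z l)).symm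
  -- determinants
  have hdetσ : σ.det ≠ 0 := by
    intro h; rw [h] at hσ; simpa using hσ
  have hdetuA : (u • amat σm j').det = u ^ d * (σ.det * σ.det) := by
    rw [Matrix.det_smul, Fintype.card_fin, amat, Matrix.det_mul, Matrix.det_transpose]
  have hsqrtN : Real.sqrt ((2*Real.pi)^d * (u • amat σm j').det)
      = Real.sqrt (2*Real.pi) ^ d * (Real.sqrt u ^ d * |σ.det|) := by
    rw [hdetuA, Real.sqrt_mul (by positivity), Real.sqrt_mul (by positivity),
      sqrt_pow' (by positivity), sqrt_pow' hu.le, Real.sqrt_mul_self_eq_abs]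
  have hdetM : (Mder σ μv s u z).det = (∏ l, x l) * (Real.sqrt u ^ d * σ.det) := by
    have hM : Mder σ μv s u z = Matrix.diagonal x * (Real.sqrt u • σ) := by
      ext l m
      simp [Mder, Matrix.diagonal_mul, hx]
    rw [hM, Matrix.det_mul, Matrix.det_diagonal, Matrix.det_smul, Fintype.card_fin]
  have hxprod : (0:ℝ) < ∏ l, x l := Finset.prod_pos fun l _ => hxpos l
  have habs : |(Mder σ μv s u z).det| = (∏ l, x l) * (Real.sqrt u ^ d * |σ.det|) := by
    rw [hdetM, abs_mul, abs_mul, abs_of_pos hxprod,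
      abs_of_nonneg (pow_nonneg hdpos.le d)]
  -- put everything together
  simp only [alpha]
  rw [hQ, hsqrtN, habs]
  have hexp : Real.exp (-(1/2:ℝ) * ∑ l, (z l)^2) = ∏ l, Real.exp (-(z l)^2/2) := by
    rw [← Real.exp_sum]
    congr 1
    rw [Finset.mul_sum]
    exact Finset.sum_congr rfl fun l _ => by ring
  rw [hexp]
  unfold gstd
  rw [Finset.prod_div_distrib, Finset.prod_const, Finset.card_univ, Fintype.card_fin]
  have h1 : Real.sqrt (2*Real.pi) ^ d ≠ 0 := by positivity
  have h2 : Real.sqrt u ^ d ≠ 0 := by positivity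
  have h3 : |σ.det| ≠ 0 := abs_ne_zero.2 hdetσ
  field_simp

/-- Change of variables. -/
lemma cov {d k : ℕ} (r : Fin k → ℝ) (σm : Fin k → Matrix (Fin d) (Fin d) ℝ)
    (j' : Fin k) (hσ : IsUnit (σm j').det) {s : Fin d → ℝ} (hs : s ∈ orthant d)
    {u : ℝ} (hu : 0 < u) (G : (Fin d → ℝ) → ℝ) :
    ∫ x in orthant d, G x * alpha r σm x s j' u
      = ∫ z, G (Fmap (σm j') (fun l => r j' - (1/2 : ℝ) * amat σm j' l l) s u z)
          * gstd d z := by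
  set μv : Fin d → ℝ := fun l => r j' - (1/2 : ℝ) * amat σm j' l l with hμv
  rw [← image_Fmap hσ μv hs hu,
    MeasureTheory.integral_image_eq_integral_abs_det_fderiv_smul volume MeasurableSet.univ
      (fun z _ => (hasFDerivAt_Fmap (σm j') μv s u z).hasFDerivWithinAt)
      (injOn_Fmap hσ μv hs hu) (fun x => G x * alpha r σm x s j' u),
    MeasureTheory.setIntegral_univ]
  congr 1
  funext z
  have hdet : (LinearMap.toContinuousLinearMap (Mder (σm j') μv s u z).mulVecLin).det
      = (Mder (σm j') μv s u z).det := by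
    rw [ContinuousLinearMap.det, LinearMap.coe_toContinuousLinearMap,
      ← Matrix.toLin'_apply', LinearMap.det_toLin']
  rw [hdet, smul_eq_mul, ← alpha_Fmap r σm j' hσ hs hu z]
  ring

lemma integrable_gauss_abs (b : ℝ) :
    Integrable (fun x : ℝ => Real.exp (-x^2/2 + b * |x|)) := by
  have h : ∀ x : ℝ, ‖Real.exp (-x^2/2 + b * |x|)‖ ≤ Real.exp (b^2) * Real.exp (-(1/4:ℝ)*x^2) := by
    intro x
    rw [Real.norm_eq_abs, abs_of_pos (Real.exp_pos _), ← Real.exp_add]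
    apply Real.exp_le_exp.2
    nlinarith [sq_nonneg (|x|/2 - b), sq_abs x, abs_nonneg x]
  refine ((integrable_exp_neg_mul_sq (by norm_num : (0:ℝ) < 1/4)).const_mul
    (Real.exp (b^2))).mono (Continuous.aestronglyMeasurable (by continuity))
    (Eventually.of_forall fun x => ?_)
  calc ‖Real.exp (-x^2/2 + b * |x|)‖ ≤ Real.exp (b^2) * Real.exp (-(1/4:ℝ)*x^2) := h x
  _ ≤ ‖Real.exp (b^2) * Real.exp (-(1/4:ℝ)*x^2)‖ := le_abs_self _

lemma integral_gauss_one : ∫ x : ℝ, Real.exp (-x^2/2) / Real.sqrt (2*Real.pi) = 1 := by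
  have h : ∀ x : ℝ, Real.exp (-x^2/2) = Real.exp (-(1/2:ℝ) * x^2) := fun x => by ring_nf
  simp_rw [h, integral_div, integral_gaussian]
  rw [div_eq_one_iff_eq (by positivity)]
  congr 1
  rw [div_div_eq_mul_div, div_eq_iff (by norm_num)]
  ring

lemma integral_gstd (d : ℕ) : ∫ z : Fin d → ℝ, gstd d z = 1 := by
  unfold gstd
  rw [volume_pi, MeasureTheory.integral_fintype_prod_eq_pow (ι := Fin d) (μ := volume)
    (f := fun x : ℝ => Real.exp (-x^2/2) / Real.sqrt (2*Real.pi)), integral_gauss_one, one_pow]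

lemma gstd_nonneg {d : ℕ} (z : Fin d → ℝ) : 0 ≤ gstd d z :=
  Finset.prod_nonneg fun l _ => div_nonneg (Real.exp_pos _).le (Real.sqrt_nonneg _)

lemma continuous_gstd (d : ℕ) : Continuous (gstd d) := by
  unfold gstd
  exact continuous_finset_prod _ fun l _ => by continuity

lemma continuous_Fmap {d : ℕ} (σ : Matrix (Fin d) (Fin d) ℝ) (μv s : Fin d → ℝ)
    (u : ℝ) : Continuous (Fmap σ μv s u) := by
  unfold Fmap
  refine continuous_pi fun l => ?_
  have : Continuous fun z : Fin d → ℝ => σ.mulVec z l := by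
    simp only [Matrix.mulVec, dotProduct]
    exact continuous_finset_sum _ fun m _ => continuous_const.mul (continuous_apply m)
  continuity

lemma tendsto_Fmap_u {d : ℕ} (σ : Matrix (Fin d) (Fin d) ℝ) (μv s : Fin d → ℝ)
    (z : Fin d → ℝ) :
    Tendsto (fun u => Fmap σ μv s u z) (nhds 0) (nhds s) := by
  rw [tendsto_pi_nhds]
  intro l
  have hcont : Continuous fun u : ℝ => s l * Real.exp (μv l * u + Real.sqrt u * σ.mulVec z l) := by
    continuity
  have := hcont.tendsto 0
  simpa [Fmap] using this

lemma gstd_mul_exp {d : ℕ} (b : ℝ) (z : Fin d → ℝ) :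
    gstd d z * Real.exp (b * ∑ m, |z m|)
      = ((Real.sqrt (2*Real.pi))⁻¹)^d * ∏ l, Real.exp (-(z l)^2/2 + b * |z l|) := by
  unfold gstd
  rw [Finset.prod_div_distrib, Finset.prod_const, Finset.card_univ, Fintype.card_fin,
    Finset.mul_sum, Real.exp_sum]
  simp_rw [Real.exp_add]
  rw [Finset.prod_mul_distrib, div_eq_mul_inv, inv_pow]
  ring

lemma integrable_bound {d : ℕ} (C b : ℝ) :
    Integrable (fun z : Fin d → ℝ => C * ∏ l, Real.exp (-(z l)^2/2 + b * |z l|)) :=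
  (Integrable.fintype_prod (f := fun _ (x : ℝ) => Real.exp (-x^2/2 + b * |x|))
    fun _ => integrable_gauss_abs b).const_mul C

end Stmt6Aux

theorem stmt_6 (d k : ℕ) (hd : 1 ≤ d) (hk : 0 < k)
    (r : Fin k → ℝ) (hr : ∀ i, 0 ≤ r i)
    (σm : Fin k → Matrix (Fin d) (Fin d) ℝ) (hσ : ∀ i, IsUnit (σm i).det)
    (Λ : Fin k → Fin k → ℝ) (hΛ1 : ∀ i j, i ≠ j → 0 ≤ Λ i j)
    (hΛ2 : ∀ i : Fin k, ∑ j, Λ i j = 0)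
    (T : ℝ) (hT : 0 < T)
    (K : (Fin d → ℝ) → ℝ) (hK0 : ∀ s ∈ orthant d, 0 ≤ K s)
    (c : NNReal) (hKlip : LipschitzOnWith c K (orthant d))
    (φ : ℝ → (Fin d → ℝ) → Fin k → ℝ)
    (hφV : MemV T φ) (hφIE : SolvesIE r σm Λ K T φ)
    (t : ℝ) (ht : t ∈ Set.Ioo (0:ℝ) T) (s : Fin d → ℝ) (hs : s ∈ orthant d)
    (j j' : Fin k) :
    Tendsto (fun u => ∫ x in orthant d, φ (t + u) x j * alpha r σm x s j' u)
      (nhdsWithin 0 (Set.Ioi 0)) (nhds (φ t s j)) := by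
  classical
  obtain ⟨ht0, htT⟩ := ht
  obtain ⟨hc, M0, hM⟩ := hφV
  have hs' : ∀ l, 0 < s l := (Stmt6Aux.mem_orthant s).1 hs
  set σ := σm j' with hσdef
  set μv : Fin d → ℝ := fun l => r j' - (1/2 : ℝ) * amat σm j' l l with hμv
  set b : ℝ := ∑ l, ∑ m, |σ l m| with hb
  have hbnn : 0 ≤ b := Finset.sum_nonneg fun _ _ => Finset.sum_nonneg fun _ _ => abs_nonneg _
  have hble : ∀ l m, |σ l m| ≤ b := by
    intro l m
    calc |σ l m| ≤ ∑ m', |σ l m'| :=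
          Finset.single_le_sum (f := fun m' => |σ l m'|)
            (fun _ _ => abs_nonneg _) (Finset.mem_univ m)
    _ ≤ ∑ l', ∑ m', |σ l' m'| :=
          Finset.single_le_sum (f := fun l' => ∑ m', |σ l' m'|)
            (fun _ _ => Finset.sum_nonneg fun _ _ => abs_nonneg _) (Finset.mem_univ l)
  set Rμ : ℝ := ∑ l, |μv l| with hRμ
  have hRle : ∀ l, |μv l| ≤ Rμ :=
    fun l => Finset.single_le_sum (f := fun l' => |μv l'|)
      (fun _ _ => abs_nonneg _) (Finset.mem_univ l)
  set S : ℝ := ∑ l, s l with hS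
  have hSnn : 0 ≤ S := Finset.sum_nonneg fun l _ => (hs' l).le
  set C : ℝ := (|M0| * (1 + S * Real.exp Rμ)) * ((Real.sqrt (2*Real.pi))⁻¹)^d with hC
  set bound : (Fin d → ℝ) → ℝ :=
    fun z => C * ∏ l, Real.exp (-(z l)^2/2 + b * |z l|) with hbound
  set Ff : ℝ → (Fin d → ℝ) → ℝ :=
    fun u z => φ (t + u) (Stmt6Aux.Fmap σ μv s u z) j * Stmt6Aux.gstd d z with hFf
  have hδ : 0 < min 1 (T - t) := lt_min one_pos (by linarith)
  have hmem : Set.Ioo (0:ℝ) (min 1 (T - t)) ∈ nhdsWithin (0:ℝ) (Set.Ioi 0) :=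
    Ioo_mem_nhdsGT_of_mem ⟨le_refl 0, hδ⟩
  have huT' : ∀ u ∈ Set.Ioo (0:ℝ) (min 1 (T - t)), t + u ∈ Set.Ioo 0 T := by
    intro u hu
    have := hu.2.trans_le (min_le_right _ _)
    exact ⟨by linarith [hu.1], by linarith⟩
  -- the uniform bound
  have hEst : ∀ u ∈ Set.Ioo (0:ℝ) (min 1 (T - t)), ∀ z, ‖Ff u z‖ ≤ bound z := by
    intro u hu z
    have hu1 : u ≤ 1 := (hu.2.trans_le (min_le_left _ _)).le
    have huT : t + u ∈ Set.Ioo 0 T := huT' u hu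
    have hFz : Stmt6Aux.Fmap σ μv s u z ∈ orthant d := Stmt6Aux.Fmap_mem σ μv s u hs z
    have hφb := hM (t + u) huT _ hFz j
    set Z : ℝ := ∑ m, |z m| with hZ
    have hZnn : 0 ≤ Z := Finset.sum_nonneg fun _ _ => abs_nonneg _
    have hElb : ∀ l, μv l * u + Real.sqrt u * σ.mulVec z l ≤ Rμ + b * Z := by
      intro l
      have h1 : μv l * u ≤ Rμ := by
        calc μv l * u ≤ |μv l * u| := le_abs_self _
        _ = |μv l| * |u| := abs_mul _ _
        _ ≤ |μv l| * 1 := by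
            refine mul_le_mul_of_nonneg_left ?_ (abs_nonneg _)
            rw [abs_of_pos hu.1]; exact hu1
        _ = |μv l| := mul_one _
        _ ≤ Rμ := hRle l
      have h2 : Real.sqrt u * σ.mulVec z l ≤ b * Z := by
        have hs1 : Real.sqrt u ≤ 1 := by
          rw [show (1:ℝ) = Real.sqrt 1 by simp]
          exact Real.sqrt_le_sqrt hu1
        have habsmv : |σ.mulVec z l| ≤ b * Z := by
          calc |σ.mulVec z l| = |∑ m, σ l m * z m| := rfl
          _ ≤ ∑ m, |σ l m * z m| := Finset.abs_sum_le_sum_abs _ _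
          _ = ∑ m, |σ l m| * |z m| := by simp_rw [abs_mul]
          _ ≤ ∑ m, b * |z m| :=
              Finset.sum_le_sum fun m _ =>
                mul_le_mul_of_nonneg_right (hble l m) (abs_nonneg _)
          _ = b * Z := by rw [hZ, Finset.mul_sum]
        calc Real.sqrt u * σ.mulVec z l ≤ |Real.sqrt u * σ.mulVec z l| := le_abs_self _
        _ = |Real.sqrt u| * |σ.mulVec z l| := abs_mul _ _
        _ ≤ 1 * (b * Z) := by
            refine mul_le_mul ?_ habsmv (abs_nonneg _) one_pos.le
            rw [abs_of_nonneg (Real.sqrt_nonneg u)]; exact hs1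
        _ = b * Z := one_mul _
      linarith
    have hnorm1 : norm1 (Stmt6Aux.Fmap σ μv s u z) ≤ S * Real.exp (Rμ + b * Z) := by
      unfold norm1
      calc (∑ l, |Stmt6Aux.Fmap σ μv s u z l|)
          = ∑ l, s l * Real.exp (μv l * u + Real.sqrt u * σ.mulVec z l) := by
            refine Finset.sum_congr rfl fun l _ => ?_
            rw [show Stmt6Aux.Fmap σ μv s u z l
                = s l * Real.exp (μv l * u + Real.sqrt u * σ.mulVec z l) from rfl]
            exact abs_of_pos (mul_pos (hs' l) (Real.exp_pos _))
      _ ≤ ∑ l, s l * Real.exp (Rμ + b * Z) :=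
            Finset.sum_le_sum fun l _ =>
              mul_le_mul_of_nonneg_left (Real.exp_le_exp.2 (hElb l)) (hs' l).le
      _ = S * Real.exp (Rμ + b * Z) := by rw [hS, ← Finset.sum_mul]
    have hgnn := Stmt6Aux.gstd_nonneg z
    have hnn : 0 ≤ norm1 (Stmt6Aux.Fmap σ μv s u z) :=
      Finset.sum_nonneg fun _ _ => abs_nonneg _
    have hexp1 : (1:ℝ) ≤ Real.exp (b * Z) :=
      Real.one_le_exp (mul_nonneg hbnn hZnn)
    calc ‖Ff u z‖ = |φ (t + u) (Stmt6Aux.Fmap σ μv s u z) j| * Stmt6Aux.gstd d z := by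
          rw [hFf, Real.norm_eq_abs, abs_mul, abs_of_nonneg hgnn]
    _ ≤ (|M0| * (1 + S * Real.exp Rμ) * Real.exp (b * Z)) * Stmt6Aux.gstd d z := by
          refine mul_le_mul_of_nonneg_right ?_ hgnn
          have h5 : |φ (t + u) (Stmt6Aux.Fmap σ μv s u z) j|
              ≤ |M0| * (1 + norm1 (Stmt6Aux.Fmap σ μv s u z)) :=
            hφb.trans (mul_le_mul_of_nonneg_right (le_abs_self M0) (by linarith))
          have h6 : norm1 (Stmt6Aux.Fmap σ μv s u z)
              ≤ S * Real.exp Rμ * Real.exp (b * Z) := by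
            rw [mul_assoc, ← Real.exp_add]; exact hnorm1
          nlinarith [abs_nonneg M0, mul_nonneg hSnn (Real.exp_pos Rμ).le]
    _ = bound z := by
          rw [hbound, hC, mul_assoc (|M0| * (1 + S * Real.exp Rμ)),
            mul_comm (Real.exp (b * Z)) (Stmt6Aux.gstd d z), Stmt6Aux.gstd_mul_exp b z]
          ring
  have hmain : Tendsto (fun u => ∫ z, Ff u z) (nhdsWithin 0 (Set.Ioi 0))
      (nhds (φ t s j)) := by
    have hlim_int : ∫ z : Fin d → ℝ, φ t s j * Stmt6Aux.gstd d z = φ t s j := by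
      rw [MeasureTheory.integral_const_mul, Stmt6Aux.integral_gstd, mul_one]
    rw [← hlim_int]
    apply tendsto_integral_filter_of_dominated_convergence bound
    · filter_upwards [hmem] with u hu
      have huT : t + u ∈ Set.Ioo 0 T := huT' u hu
      have hcont : Continuous fun z => φ (t + u) (Stmt6Aux.Fmap σ μv s u z) j := by
        rw [← continuousOn_univ]
        refine ContinuousOn.comp (hc j)
          ((continuous_const.prodMk (Stmt6Aux.continuous_Fmap σ μv s u)).continuousOn) ?_
        intro z _
        exact ⟨huT, Stmt6Aux.Fmap_mem σ μv s u hs z⟩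
      exact (hcont.mul (Stmt6Aux.continuous_gstd d)).aestronglyMeasurable
    · filter_upwards [hmem] with u hu
      exact Eventually.of_forall (hEst u hu)
    · exact Stmt6Aux.integrable_bound C b
    · refine Eventually.of_forall fun z => ?_
      have h1 : Tendsto (fun u => (t + u, Stmt6Aux.Fmap σ μv s u z))
          (nhdsWithin 0 (Set.Ioi 0)) (nhds (t, s)) := by
        refine Tendsto.mono_left ?_ nhdsWithin_le_nhds
        refine Tendsto.prodMk_nhds ?_ (Stmt6Aux.tendsto_Fmap_u σ μv s z)
        have : Continuous fun u : ℝ => t + u := continuous_const.add continuous_id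
        simpa using this.tendsto (0:ℝ)
      have h2 : ∀ᶠ u in nhdsWithin (0:ℝ) (Set.Ioi 0),
          (t + u, Stmt6Aux.Fmap σ μv s u z) ∈ Set.Ioo 0 T ×ˢ orthant d := by
        filter_upwards [hmem] with u hu
        exact ⟨huT' u hu, Stmt6Aux.Fmap_mem σ μv s u hs z⟩
      have h3 : Tendsto (fun u => (t + u, Stmt6Aux.Fmap σ μv s u z))
          (nhdsWithin 0 (Set.Ioi 0)) (nhdsWithin (t, s) (Set.Ioo 0 T ×ˢ orthant d)) :=
        tendsto_nhdsWithin_iff.2 ⟨h1, h2⟩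
      have h4 := ((hc j) (t, s) ⟨⟨ht0, htT⟩, hs⟩).tendsto.comp h3
      exact h4.mul tendsto_const_nhds
  refine Tendsto.congr' ?_ hmain
  filter_upwards [self_mem_nhdsWithin] with u hu
  exact (Stmt6Aux.cov r σm j' (hσ j') hs hu (fun x => φ (t + u) x j)).symm
end
end

section
/- For all x, s ∈ (0,∞)^d, v > 0 and i ∈ X, setting g₁(x,s,i,v) = (∂α/∂v)/α and g₂^l(x,s,i,v) = (∂α/∂s_l)/α, the following identity holds: −g₁ + r(i) Σ_{l=1}^d s_l g₂^l + (1/2) Σ_{l=1}^d Σ_{l'=1}^d s_l s_{l'} a_{ll'}(i) (∂g₂^l/∂s_{l'} + g₂^l g₂^{l'}) = 0. -/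
open MeasureTheory Real Filter Matrix

noncomputable section
set_option maxHeartbeats 1000000

/-- Partial derivative in the `l`-th space coordinate. -/
def pd {d : ℕ} (l : Fin d) (f : (Fin d → ℝ) → ℝ) (s : Fin d → ℝ) : ℝ :=
  deriv (fun c => f (Function.update s l c)) (s l)

section aux
variable {d k : ℕ}

/-- auxiliary: the shifted log-vector in the exponent -/
def efn (r : Fin k → ℝ) (σm : Fin k → Matrix (Fin d) (Fin d) ℝ)
    (x s : Fin d → ℝ) (i : Fin k) (v : ℝ) : Fin d → ℝ :=
  fun j => Real.log (x j) - Real.log (s j) - (r i - (1/2:ℝ) * amat σm i j j) * v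

/-- auxiliary: `B(z - μ)` entries -/
def Sfn (r : Fin k → ℝ) (σm : Fin k → Matrix (Fin d) (Fin d) ℝ)
    (x s : Fin d → ℝ) (i : Fin k) (v : ℝ) : Fin d → ℝ :=
  fun l => ∑ j, (amat σm i)⁻¹ l j * efn r σm x s i v j


lemma ratio_eq (f : ℝ → ℝ) (C a t D : ℝ) (hC : C ≠ 0)
    (hf : HasDerivAt f D t) (ha : a = f t) :
    deriv (fun c => Real.exp (f c) / C) t / (Real.exp a / C) = D := by
  rw [(hf.exp.div_const C).deriv, ha]
  field_simp [Real.exp_ne_zero]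

set_option maxHeartbeats 400000
section main
variable (r : Fin k → ℝ) (σm : Fin k → Matrix (Fin d) (Fin d) ℝ) (i : Fin k)

lemma amat_det_pos (hσ : IsUnit (σm i).det) : 0 < (amat σm i).det := by
  have h : (amat σm i).det = (σm i).det * (σm i).det := by
    simp [amat, Matrix.det_mul, Matrix.det_transpose]
  rw [h]
  have : (σm i).det ≠ 0 := by simpa [isUnit_iff_ne_zero] using hσ
  exact mul_self_pos.2 this

lemma amat_isUnit (hσ : IsUnit (σm i).det) : IsUnit (amat σm i).det :=
  isUnit_iff_ne_zero.2 (ne_of_gt (amat_det_pos σm i hσ))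

lemma binv_symm (hσ : IsUnit (σm i).det) (j j' : Fin d) :
    (amat σm i)⁻¹ j j' = (amat σm i)⁻¹ j' j := by
  have hsym : (amat σm i)ᵀ = amat σm i := by simp [amat, Matrix.transpose_mul]
  have : ((amat σm i)⁻¹)ᵀ = (amat σm i)⁻¹ := by
    rw [Matrix.transpose_nonsing_inv, hsym]
  conv_lhs => rw [← this]
  rfl

lemma alpha_eq (hσ : IsUnit (σm i).det) (x t : Fin d → ℝ)
    (hx : ∀ l, 0 < x l) (ht : ∀ l, 0 < t l) (w : ℝ) (hw : 0 < w) :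
    alpha r σm x t i w =
      Real.exp (-(1/(2*w)) * ∑ j, ∑ j', (amat σm i)⁻¹ j j'
          * (Real.log (x j) - Real.log (t j) - (r i - (1/2:ℝ) * amat σm i j j) * w)
          * (Real.log (x j') - Real.log (t j') - (r i - (1/2:ℝ) * amat σm i j' j') * w))
        / (Real.sqrt (((2 * Real.pi) ^ d * (amat σm i).det) * w ^ d) * ∏ l, x l) := by
  haveI : Invertible w := invertibleOfNonzero hw.ne'
  have hinv : (w • amat σm i)⁻¹ = w⁻¹ • (amat σm i)⁻¹ := by
    rw [Matrix.inv_smul _ _ (amat_isUnit σm i hσ), invOf_eq_inv]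
  have hdet : (w • amat σm i).det = w ^ d * (amat σm i).det := by
    rw [Matrix.det_smul, Fintype.card_fin]
  unfold alpha
  rw [hinv, hdet]
  congr 1
  · congr 1
    rw [Finset.mul_sum, Finset.mul_sum]
    apply Finset.sum_congr rfl; intro j _
    rw [Finset.mul_sum, Finset.mul_sum]
    apply Finset.sum_congr rfl; intro j' _
    rw [Matrix.smul_apply, smul_eq_mul, Real.log_div (hx j).ne' (ht j).ne',
        Real.log_div (hx j').ne' (ht j').ne']
    ring
  · congr 2
    ring

lemma den_pos (hσ : IsUnit (σm i).det) (x : Fin d → ℝ) (hx : ∀ l, 0 < x l)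
    (w : ℝ) (hw : 0 < w) :
    0 < Real.sqrt (((2 * Real.pi) ^ d * (amat σm i).det) * w ^ d) * ∏ l, x l := by
  have h1 : 0 < ((2 * Real.pi) ^ d * (amat σm i).det) * w ^ d := by
    have := amat_det_pos σm i hσ
    have := Real.pi_pos
    positivity
  have h2 : (0:ℝ) < ∏ l, x l := Finset.prod_pos (fun l _ => hx l)
  positivity

/-- derivative of the `E`-factors in the exponent w.r.t. the `l`-th coordinate. -/
lemma hasDerivAt_E (x t : Fin d → ℝ) (ht : ∀ l, 0 < t l) (cf : Fin d → ℝ) (v : ℝ)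
    (l j : Fin d) :
    HasDerivAt (fun cc => Real.log (x j) - Real.log (Function.update t l cc j) - cf j * v)
      (if j = l then -(t l)⁻¹ else 0) (t l) := by
  by_cases hjl : j = l
  · subst hjl
    simp only [Function.update_self, if_pos rfl]
    have h : HasDerivAt (fun cc : ℝ => Real.log (x j) - Real.log cc - cf j * v)
        (-(t j)⁻¹) (t j) := by
      have := ((Real.hasDerivAt_log (ht j).ne').const_sub (Real.log (x j))).sub_const (cf j * v)
      simpa using this
    simpa using h
  · simp only [Function.update_apply, if_neg hjl]
    simpa using (hasDerivAt_const (t l) (Real.log (x j) - Real.log (t j) - cf j * v))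

lemma g2_eq (hσ : IsUnit (σm i).det) (x t : Fin d → ℝ)
    (hx : ∀ l, 0 < x l) (ht : ∀ l, 0 < t l) (v : ℝ) (hv : 0 < v) (l : Fin d) :
    pd l (fun s' => alpha r σm x s' i v) t / alpha r σm x t i v
      = (v * t l)⁻¹ * ∑ j, (amat σm i)⁻¹ l j
          * (Real.log (x j) - Real.log (t j) - (r i - (1/2:ℝ) * amat σm i j j) * v) := by
  set A := amat σm i with hA
  set B := A⁻¹ with hB
  set cf : Fin d → ℝ := fun j => r i - (1/2:ℝ) * A j j with hcf
  set e : Fin d → ℝ := fun j => Real.log (x j) - Real.log (t j) - cf j * v with he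
  set den := Real.sqrt (((2 * Real.pi) ^ d * A.det) * v ^ d) * ∏ l, x l with hden
  have hdenpos := den_pos σm i hσ x hx v hv
  set E : Fin d → ℝ → ℝ := fun j cc =>
    Real.log (x j) - Real.log (Function.update t l cc j) - cf j * v with hE
  set dE : Fin d → ℝ := fun j => if j = l then -(t l)⁻¹ else 0 with hdE
  -- the eventual form of alpha along the l-th coordinate line
  have hEq : (fun cc => alpha r σm x (Function.update t l cc) i v)
      =ᶠ[nhds (t l)] (fun cc =>
        Real.exp (-(1/(2*v)) * ∑ j, ∑ j', B j j' * E j cc * E j' cc) / den) := by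
    filter_upwards [isOpen_Ioi.mem_nhds (ht l)] with cc hcc
    have hupd : ∀ m, 0 < Function.update t l cc m := by
      intro m
      rcases eq_or_ne m l with hm | hm
      · subst hm; simpa using hcc
      · simpa [Function.update_apply, hm] using ht m
    exact alpha_eq r σm i hσ x _ hx hupd v hv
  have hEt : ∀ j, E j (t l) = e j := by
    intro j
    simp only [hE, he, Function.update_eq_self]
  -- derivative of the exponent
  have hsum : HasDerivAt (fun cc => ∑ j, ∑ j', B j j' * E j cc * E j' cc)
      (∑ j, ∑ j', (B j j' * dE j * e j' + B j j' * e j * dE j')) (t l) := by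
    apply HasDerivAt.fun_sum
    intro j _
    apply HasDerivAt.fun_sum
    intro j' _
    have h1 := (hasDerivAt_E x t ht cf v l j).const_mul (B j j')
    have h2 := h1.fun_mul (hasDerivAt_E x t ht cf v l j')
    simpa only [hE, he, hdE, Function.update_eq_self] using h2
  have hF := hsum.const_mul (-(1/(2*v)))
  unfold pd
  rw [hEq.deriv_eq, alpha_eq r σm i hσ x t hx ht v hv]
  rw [ratio_eq _ den _ (t l) _ hdenpos.ne' hF
    (by simp only [hE, hcf, ← hA, ← hB, Function.update_eq_self])]
  -- now the value identity
  have h1 : ∑ j, ∑ j', B j j' * dE j * e j' = -(t l)⁻¹ * ∑ j', B l j' * e j' := by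
    rw [Finset.sum_eq_single l]
    · rw [Finset.mul_sum]
      apply Finset.sum_congr rfl; intro j' _
      simp only [hdE, if_pos rfl]; ring
    · intro j _ hj
      simp [hdE, hj]
    · intro h; exact absurd (Finset.mem_univ l) h
  have h2 : ∑ j, ∑ j', B j j' * e j * dE j' = -(t l)⁻¹ * ∑ j, B l j * e j := by
    have h0 : ∀ j : Fin d, ∑ j', B j j' * e j * dE j' = B j l * e j * -(t l)⁻¹ := by
      intro j
      simp only [hdE, mul_ite, mul_zero]
      rw [Finset.sum_ite_eq' Finset.univ l (fun j' => B j j' * e j * -(t l)⁻¹)]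
      simp
    rw [Finset.sum_congr rfl (fun j _ => h0 j), Finset.mul_sum]
    apply Finset.sum_congr rfl; intro j _
    rw [hB, hA, binv_symm σm i hσ j l, ← hA, ← hB]
    ring
  rw [show (∑ j, ∑ j', (B j j' * dE j * e j' + B j j' * e j * dE j'))
      = (∑ j, ∑ j', B j j' * dE j * e j') + ∑ j, ∑ j', B j j' * e j * dE j' by
    simp only [Finset.sum_add_distrib]]
  rw [h1, h2]
  simp only [he, hcf]
  have hS : (∑ j', B l j' * (Real.log (x j') - Real.log (t j') - (r i - 1/2 * A j' j') * v))
      = ∑ j, B l j * (Real.log (x j) - Real.log (t j) - (r i - 1/2 * A j j) * v) := rfl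
  rw [hS]
  field_simp
  ring

lemma ratio_eq2 (f g : ℝ → ℝ) (a t D Dg : ℝ) (hf : HasDerivAt f D t)
    (hg : HasDerivAt g Dg t) (hgne : g t ≠ 0) (ha : a = f t) :
    deriv (fun c => Real.exp (f c) / g c) t / (Real.exp a / g t) = D - Dg / g t := by
  rw [(hf.exp.fun_div hg hgne).deriv, ha]
  field_simp [Real.exp_ne_zero]

lemma g2d_eq (hσ : IsUnit (σm i).det) (x s : Fin d → ℝ)
    (hx : ∀ m, 0 < x m) (hs : ∀ m, 0 < s m) (v : ℝ) (hv : 0 < v) (l l' : Fin d) :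
    pd l' (fun s' => pd l (fun s'' => alpha r σm x s'' i v) s' / alpha r σm x s' i v) s
      = -((amat σm i)⁻¹ l l') / (v * s l * s l')
        - (if l = l' then ((v * s l)⁻¹ * ∑ j, (amat σm i)⁻¹ l j
            * (Real.log (x j) - Real.log (s j) - (r i - (1/2:ℝ) * amat σm i j j) * v)) / s l
           else 0) := by
  set A := amat σm i with hA
  set B := A⁻¹ with hB
  set cf : Fin d → ℝ := fun j => r i - (1/2:ℝ) * A j j with hcf
  set e : Fin d → ℝ := fun j => Real.log (x j) - Real.log (s j) - cf j * v with he
  have hEq : (fun c => pd l (fun s'' => alpha r σm x s'' i v) (Function.update s l' c)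
        / alpha r σm x (Function.update s l' c) i v)
      =ᶠ[nhds (s l')] (fun c => (v * Function.update s l' c l)⁻¹
        * ∑ j, B l j * (Real.log (x j) - Real.log (Function.update s l' c j) - cf j * v)) := by
    filter_upwards [isOpen_Ioi.mem_nhds (hs l')] with c hc
    have hupd : ∀ m, 0 < Function.update s l' c m := by
      intro m
      rcases eq_or_ne m l' with hm | hm
      · subst hm; simpa using hc
      · simpa [Function.update_apply, hm] using hs m
    exact g2_eq r σm i hσ x _ hx hupd v hv l
  have hpd : pd l' (fun s' => pd l (fun s'' => alpha r σm x s'' i v) s' / alpha r σm x s' i v) s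
      = deriv (fun c => pd l (fun s'' => alpha r σm x s'' i v) (Function.update s l' c)
          / alpha r σm x (Function.update s l' c) i v) (s l') := rfl
  rw [hpd, hEq.deriv_eq]
  -- derivative of the inner sum part
  have hSum : HasDerivAt (fun c => ∑ j, B l j
        * (Real.log (x j) - Real.log (Function.update s l' c j) - cf j * v))
      (B l l' * -(s l')⁻¹) (s l') := by
    have h := HasDerivAt.fun_sum (u := Finset.univ)
      (A := fun j c => B l j * (Real.log (x j) - Real.log (Function.update s l' c j) - cf j * v))
      (A' := fun j => B l j * (if j = l' then -(s l')⁻¹ else 0))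
      (fun j _ => (hasDerivAt_E x s hs cf v l' j).const_mul (B l j))
    have hval : (∑ j, B l j * (if j = l' then -(s l')⁻¹ else 0)) = B l l' * -(s l')⁻¹ := by
      simp only [mul_ite, mul_zero]
      rw [Finset.sum_ite_eq' Finset.univ l' (fun j => B l j * -(s l')⁻¹)]
      simp
    rwa [hval] at h
  rcases eq_or_ne l l' with hll | hll
  · -- diagonal case
    subst hll
    have hg : HasDerivAt (fun c => (v * Function.update s l c l)⁻¹)
        (-v / (v * s l)^2) (s l) := by
      have h1 : HasDerivAt (fun c : ℝ => v * c) v (s l) := by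
        simpa using (hasDerivAt_id (s l)).const_mul v
      have h2 := h1.fun_inv (mul_pos hv (hs l)).ne'
      simp only [Function.update_self]
      convert h2 using 1
    have hprod := hg.fun_mul hSum
    rw [hprod.deriv]
    simp only [Function.update_eq_self, hcf]
    simp only [eq_self_iff_true, if_true, ite_true]
    have h1 : s l ≠ 0 := (hs l).ne'
    have h2 : v ≠ 0 := hv.ne'
    set S := ∑ j, B l j * (Real.log (x j) - Real.log (s j) - (r i - (1/2:ℝ) * A j j) * v) with hS
    field_simp
    ring
  · -- off-diagonal case
    have hg : HasDerivAt (fun c => (v * Function.update s l' c l)⁻¹) 0 (s l') := by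
      simp only [Function.update_apply, if_neg hll]
      exact hasDerivAt_const (s l') ((v * s l)⁻¹)
    have hprod := hg.fun_mul hSum
    rw [hprod.deriv]
    simp only [Function.update_eq_self, hcf]
    rw [if_neg hll]
    have h1 : s l ≠ 0 := (hs l).ne'
    have h1' : s l' ≠ 0 := (hs l').ne'
    have h2 : v ≠ 0 := hv.ne'
    field_simp
    ring

lemma g1_eq (hσ : IsUnit (σm i).det) (hd : 1 ≤ d) (x s : Fin d → ℝ)
    (hx : ∀ m, 0 < x m) (hs : ∀ m, 0 < s m) (v : ℝ) (hv : 0 < v) :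
    deriv (fun w => alpha r σm x s i w) v / alpha r σm x s i v
      = 1/(2*v^2) * (∑ j, ∑ j', (amat σm i)⁻¹ j j'
            * (Real.log (x j) - Real.log (s j) - (r i - (1/2:ℝ) * amat σm i j j) * v)
            * (Real.log (x j') - Real.log (s j') - (r i - (1/2:ℝ) * amat σm i j' j') * v))
        + -(1/(2*v)) * (∑ j, ∑ j',
            ((amat σm i)⁻¹ j j' * -(r i - (1/2:ℝ) * amat σm i j j)
              * (Real.log (x j') - Real.log (s j') - (r i - (1/2:ℝ) * amat σm i j' j') * v)
            + (amat σm i)⁻¹ j j'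
              * (Real.log (x j) - Real.log (s j) - (r i - (1/2:ℝ) * amat σm i j j) * v)
              * -(r i - (1/2:ℝ) * amat σm i j' j')))
        - (d:ℝ)/(2*v) := by
  set A := amat σm i with hA
  set B := A⁻¹ with hB
  set cf : Fin d → ℝ := fun j => r i - (1/2:ℝ) * A j j with hcf
  set K := (2 * Real.pi) ^ d * A.det with hK
  set P := ∏ l, x l with hP
  have hKpos : 0 < K := by
    have := amat_det_pos σm i hσ
    have := Real.pi_pos
    rw [hK, hA]
    positivity
  have hPpos : (0:ℝ) < P := Finset.prod_pos (fun m _ => hx m)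
  have hEq : (fun w => alpha r σm x s i w) =ᶠ[nhds v] (fun w =>
      Real.exp (-(1/(2*w)) * ∑ j, ∑ j', B j j'
          * (Real.log (x j) - Real.log (s j) - cf j * w)
          * (Real.log (x j') - Real.log (s j') - cf j' * w))
        / (Real.sqrt (K * w ^ d) * P)) := by
    filter_upwards [isOpen_Ioi.mem_nhds hv] with w hw
    exact alpha_eq r σm i hσ x s hx hs w hw
  rw [hEq.deriv_eq, alpha_eq r σm i hσ x s hx hs v hv]
  -- derivative of the exponent
  have hq : HasDerivAt (fun w : ℝ => -(1/(2*w))) (1/(2*v^2)) v := by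
    have h1 : HasDerivAt (fun w : ℝ => 2*w) 2 v := by simpa using (hasDerivAt_id v).const_mul 2
    have h2 := (h1.fun_inv (by positivity : (2*v) ≠ 0)).fun_neg
    have hfun : (fun w : ℝ => -(1/(2*w))) = fun w => -((2*w)⁻¹) := by
      funext w; rw [one_div]
    rw [hfun]
    rw [show (1/(2*v^2):ℝ) = -(-2/(2*v)^2) by ring]
    exact h2
  have hEw : ∀ j : Fin d, HasDerivAt
      (fun w => Real.log (x j) - Real.log (s j) - cf j * w) (-(cf j)) v := by
    intro j
    simpa using (hasDerivAt_const v (Real.log (x j) - Real.log (s j))).fun_sub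
      ((hasDerivAt_id v).const_mul (cf j))
  have hS : HasDerivAt (fun w => ∑ j, ∑ j', B j j'
        * (Real.log (x j) - Real.log (s j) - cf j * w)
        * (Real.log (x j') - Real.log (s j') - cf j' * w))
      (∑ j, ∑ j', (B j j' * -(cf j)
          * (Real.log (x j') - Real.log (s j') - cf j' * v)
        + B j j' * (Real.log (x j) - Real.log (s j) - cf j * v) * -(cf j'))) v := by
    apply HasDerivAt.fun_sum
    intro j _
    apply HasDerivAt.fun_sum
    intro j' _
    exact ((hEw j).const_mul (B j j')).mul (hEw j')
  have hf := hq.fun_mul hS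
  have hg : HasDerivAt (fun w => Real.sqrt (K * w ^ d) * P)
      (K * (d * v ^ (d-1)) / (2 * Real.sqrt (K * v ^ d)) * P) v := by
    have h1 := (hasDerivAt_pow d v).const_mul K
    have h2 := h1.sqrt (by positivity : K * v ^ d ≠ 0)
    exact h2.mul_const P
  have hgne : Real.sqrt (K * v ^ d) * P ≠ 0 := by positivity
  rw [ratio_eq2 _ _ _ v _ _ hf hg hgne rfl]
  have hDg : K * (d * v ^ (d-1)) / (2 * Real.sqrt (K * v ^ d)) * P
      / (Real.sqrt (K * v ^ d) * P) = (d:ℝ)/(2*v) := by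
    have h1 : Real.sqrt K * Real.sqrt K = K := Real.mul_self_sqrt hKpos.le
    have h2 : Real.sqrt (v^d) * Real.sqrt (v^d) = v^d :=
      Real.mul_self_sqrt (pow_pos hv d).le
    have hvpow : v ^ d = v ^ (d-1) * v := by
      rw [← pow_succ, Nat.sub_add_cancel hd]
    have h3 : Real.sqrt (K * v ^ d) * Real.sqrt (K * v ^ d) = K * v ^ d :=
      Real.mul_self_sqrt (by positivity)
    rw [div_eq_div_iff (by positivity) (by positivity), div_mul_eq_mul_div, div_mul_eq_mul_div,
      div_eq_iff (by positivity)]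
    linear_combination (-(2:ℝ) * d * P) * h3 + (-2 * K * d * P) * hvpow
  rw [hDg]
lemma sumAB (M : Matrix (Fin d) (Fin d) ℝ) (hM : IsUnit M.det) (l j : Fin d) :
    (∑ m, M l m * M⁻¹ m j) = if l = j then (1:ℝ) else 0 := by
  have h := congrFun (congrFun (Matrix.mul_nonsing_inv M hM) l) j
  rw [Matrix.mul_apply] at h
  rw [h, Matrix.one_apply]

lemma sumAe (M : Matrix (Fin d) (Fin d) ℝ) (hM : IsUnit M.det) (g : Fin d → ℝ) (l : Fin d) :
    ∑ l', M l l' * (∑ j, M⁻¹ l' j * g j) = g l := by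
  have h : ∑ l', M l l' * (∑ j, M⁻¹ l' j * g j) = ∑ j, (∑ l', M l l' * M⁻¹ l' j) * g j := by
    simp only [Finset.mul_sum, Finset.sum_mul]
    rw [Finset.sum_comm]
    exact Finset.sum_congr rfl fun j _ => Finset.sum_congr rfl fun l' _ => by ring
  rw [h, Finset.sum_congr rfl fun j _ => by rw [sumAB M hM l j]]
  simp [Finset.sum_ite_eq]

end main
end aux

theorem stmt_9 (d k : ℕ) (hd : 1 ≤ d) (hk : 0 < k)
    (r : Fin k → ℝ) (hr : ∀ i, 0 ≤ r i)
    (σm : Fin k → Matrix (Fin d) (Fin d) ℝ) (hσ : ∀ i, IsUnit (σm i).det)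
    (x s : Fin d → ℝ) (hx : x ∈ orthant d) (hs : s ∈ orthant d)
    (v : ℝ) (hv : 0 < v) (i : Fin k) :
    -(deriv (fun w => alpha r σm x s i w) v / alpha r σm x s i v)
      + r i * ∑ l, s l *
          (pd l (fun s' => alpha r σm x s' i v) s / alpha r σm x s i v)
      + (1/2 : ℝ) * ∑ l, ∑ l', s l * s l' * amat σm i l l' *
          (pd l' (fun s' =>
              pd l (fun s'' => alpha r σm x s'' i v) s' / alpha r σm x s' i v) s
            + (pd l (fun s' => alpha r σm x s' i v) s / alpha r σm x s i v)
              * (pd l' (fun s' => alpha r σm x s' i v) s / alpha r σm x s i v))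
      = 0 := by
  have hx' : ∀ m, 0 < x m := fun m => hx m (Set.mem_univ m)
  have hs' : ∀ m, 0 < s m := fun m => hs m (Set.mem_univ m)
  have hvne : v ≠ 0 := hv.ne'
  have hAunit : IsUnit (amat σm i).det := amat_isUnit σm i (hσ i)
  have h1 : deriv (fun w => alpha r σm x s i w) v / alpha r σm x s i v
      = 1/(2*v^2) * (∑ j, ∑ j', (amat σm i)⁻¹ j j' * efn r σm x s i v j * efn r σm x s i v j')
        + -(1/(2*v)) * (∑ j, ∑ j',
            ((amat σm i)⁻¹ j j' * -(r i - (1/2:ℝ) * amat σm i j j) * efn r σm x s i v j'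
            + (amat σm i)⁻¹ j j' * efn r σm x s i v j * -(r i - (1/2:ℝ) * amat σm i j' j')))
        - (d:ℝ)/(2*v) := g1_eq r σm i (hσ i) hd x s hx' hs' v hv
  have h2 : ∀ l, pd l (fun s' => alpha r σm x s' i v) s / alpha r σm x s i v
      = (v * s l)⁻¹ * Sfn r σm x s i v l :=
    fun l => g2_eq r σm i (hσ i) x s hx' hs' v hv l
  have h22 : ∀ l l', pd l' (fun s' =>
        pd l (fun s'' => alpha r σm x s'' i v) s' / alpha r σm x s' i v) s
      = -((amat σm i)⁻¹ l l') / (v * s l * s l')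
        - (if l = l' then ((v * s l)⁻¹ * Sfn r σm x s i v l) / s l else 0) :=
    fun l l' => g2d_eq r σm i (hσ i) x s hx' hs' v hv l l'
  rw [h1]
  simp only [h22, h2]
  -- pointwise simplification of the double-sum summand
  have e4a : ∀ l l' : Fin d, s l * s l' * amat σm i l l' *
      ((-((amat σm i)⁻¹ l l') / (v * s l * s l')
        - (if l = l' then ((v * s l)⁻¹ * Sfn r σm x s i v l) / s l else 0))
       + (v * s l)⁻¹ * Sfn r σm x s i v l * ((v * s l')⁻¹ * Sfn r σm x s i v l'))
      = -(amat σm i l l' * (amat σm i)⁻¹ l l')/v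
        - (if l = l' then amat σm i l l * (v⁻¹ * Sfn r σm x s i v l) else 0)
        + v⁻¹ * Sfn r σm x s i v l * (v⁻¹ * Sfn r σm x s i v l') * amat σm i l l' := by
    intro l l'
    rcases eq_or_ne l l' with h | h
    · subst h
      rw [if_pos rfl, if_pos rfl]
      have hne := (hs' l).ne'
      field_simp
    · rw [if_neg h, if_neg h]
      have hne := (hs' l).ne'
      have hne' := (hs' l').ne'
      field_simp
      ring
  simp only [e4a]
  -- split all the sums
  simp only [Finset.sum_add_distrib, Finset.sum_sub_distrib]
  -- evaluate the trace sum
  have p1 : ∑ l : Fin d, ∑ l', -(amat σm i l l' * (amat σm i)⁻¹ l l')/v = (d:ℝ) * -(1/v) := by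
    have hper : ∀ l : Fin d, ∑ l', -(amat σm i l l' * (amat σm i)⁻¹ l l')/v = -(1/v) := by
      intro l
      rw [Finset.sum_congr rfl fun l' _ => show
          -(amat σm i l l' * (amat σm i)⁻¹ l l')/v
            = -(1/v) * (amat σm i l l' * (amat σm i)⁻¹ l' l) from by
        rw [binv_symm σm i (hσ i) l l']; ring]
      rw [← Finset.mul_sum, sumAB (amat σm i) hAunit l l, if_pos rfl, mul_one]
    rw [Finset.sum_congr rfl fun l _ => hper l, Finset.sum_const, Finset.card_univ,
      Fintype.card_fin, nsmul_eq_mul]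
  -- evaluate the diagonal sum
  have p2 : ∑ l : Fin d, ∑ l', (if l = l' then amat σm i l l * (v⁻¹ * Sfn r σm x s i v l) else 0)
      = ∑ l, amat σm i l l * (v⁻¹ * Sfn r σm x s i v l) := by
    refine Finset.sum_congr rfl fun l _ => ?_
    simp [Finset.sum_ite_eq]
  -- evaluate the quadratic sum
  have p3 : ∑ l : Fin d, ∑ l', v⁻¹ * Sfn r σm x s i v l * (v⁻¹ * Sfn r σm x s i v l')
        * amat σm i l l'
      = ∑ l, v⁻¹ * Sfn r σm x s i v l * (v⁻¹ * efn r σm x s i v l) := by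
    refine Finset.sum_congr rfl fun l _ => ?_
    have h := sumAe (amat σm i) hAunit (efn r σm x s i v) l
    calc ∑ l', v⁻¹ * Sfn r σm x s i v l * (v⁻¹ * Sfn r σm x s i v l') * amat σm i l l'
        = v⁻¹ * Sfn r σm x s i v l * v⁻¹ * ∑ l', amat σm i l l' * Sfn r σm x s i v l' := by
          rw [Finset.mul_sum]
          exact Finset.sum_congr rfl fun l' _ => by ring
      _ = v⁻¹ * Sfn r σm x s i v l * (v⁻¹ * efn r σm x s i v l) := by
          rw [show ∑ l', amat σm i l l' * Sfn r σm x s i v l' = efn r σm x s i v l from h]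
          ring
  rw [p1, p2, p3]
  -- reduce the exponent double sums
  have q1 : ∑ j : Fin d, ∑ j', (amat σm i)⁻¹ j j' * efn r σm x s i v j * efn r σm x s i v j'
      = ∑ j, efn r σm x s i v j * Sfn r σm x s i v j := by
    refine Finset.sum_congr rfl fun j _ => ?_
    rw [show Sfn r σm x s i v j = ∑ j', (amat σm i)⁻¹ j j' * efn r σm x s i v j' from rfl,
      Finset.mul_sum]
    exact Finset.sum_congr rfl fun j' _ => by ring
  have q2a : ∑ j : Fin d, ∑ j', (amat σm i)⁻¹ j j' * -(r i - (1/2:ℝ) * amat σm i j j)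
        * efn r σm x s i v j'
      = ∑ j, -(r i - (1/2:ℝ) * amat σm i j j) * Sfn r σm x s i v j := by
    refine Finset.sum_congr rfl fun j _ => ?_
    rw [show Sfn r σm x s i v j = ∑ j', (amat σm i)⁻¹ j j' * efn r σm x s i v j' from rfl,
      Finset.mul_sum]
    exact Finset.sum_congr rfl fun j' _ => by ring
  have q2b : ∑ j : Fin d, ∑ j', (amat σm i)⁻¹ j j' * efn r σm x s i v j
        * -(r i - (1/2:ℝ) * amat σm i j' j')
      = ∑ j, -(r i - (1/2:ℝ) * amat σm i j j) * Sfn r σm x s i v j := by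
    rw [Finset.sum_comm]
    refine Finset.sum_congr rfl fun j' _ => ?_
    rw [show Sfn r σm x s i v j' = ∑ j, (amat σm i)⁻¹ j' j * efn r σm x s i v j from rfl,
      Finset.mul_sum]
    refine Finset.sum_congr rfl fun j _ => ?_
    rw [binv_symm σm i (hσ i) j j']
    ring
  rw [q1, q2a, q2b]
  -- the sum against s
  have e3 : ∑ l, s l * ((v * s l)⁻¹ * Sfn r σm x s i v l) = v⁻¹ * ∑ l, Sfn r σm x s i v l := by
    rw [Finset.mul_sum]
    refine Finset.sum_congr rfl fun l _ => ?_
    have hne := (hs' l).ne'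
    field_simp
  rw [e3]
  -- linearize the drift sum
  have hN : ∑ j, -(r i - (1/2:ℝ) * amat σm i j j) * Sfn r σm x s i v j
      = -(r i) * (∑ j, Sfn r σm x s i v j)
        + (1/2:ℝ) * (∑ j, amat σm i j j * Sfn r σm x s i v j) := by
    rw [Finset.mul_sum, Finset.mul_sum, ← Finset.sum_add_distrib]
    exact Finset.sum_congr rfl fun j _ => by ring
  rw [hN]
  -- the quadratic piece as a multiple of q1's sum
  have hQ : ∑ l, v⁻¹ * Sfn r σm x s i v l * (v⁻¹ * efn r σm x s i v l)
      = v⁻¹ * v⁻¹ * ∑ j, efn r σm x s i v j * Sfn r σm x s i v j := by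
    rw [Finset.mul_sum]
    exact Finset.sum_congr rfl fun l _ => by ring
  rw [hQ]
  have pA : ∑ l, amat σm i l l * (v⁻¹ * Sfn r σm x s i v l)
      = v⁻¹ * ∑ l, amat σm i l l * Sfn r σm x s i v l := by
    rw [Finset.mul_sum]
    exact Finset.sum_congr rfl fun l _ => by ring
  rw [pA]
  field_simp
  ring
end
end

section
/- Let φ ∈ V be the unique solution of the integral equation (IE). Then φ is non-negative and of at most linear growth in the space variable: φ(t,s,i) ≥ 0 for all (t,s,i), and there is a constant M such that |φ(t,s,i)| ≤ M(1 + ‖s‖₁) for all (t,s,i) ∈ (0,T)×(0,∞)^d×X. -/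
open MeasureTheory Real Filter Matrix

noncomputable section

section AuxMoment

variable {d k : ℕ}

variable (r : Fin k → ℝ) (σm : Fin k → Matrix (Fin d) (Fin d) ℝ) (i : Fin k)
  (hσ : IsUnit (σm i).det) {v : ℝ} (hv : 0 < v) {s : Fin d → ℝ} (hs : s ∈ orthant d)

lemma measurableSet_orthant : MeasurableSet (orthant d) :=
  MeasurableSet.univ_pi fun _ => measurableSet_Ioi

lemma norm1_nonneg (s : Fin d → ℝ) : 0 ≤ norm1 s :=
  Finset.sum_nonneg fun _ _ => abs_nonneg _

lemma norm1_eq_sum {s : Fin d → ℝ} (hs : s ∈ orthant d) : norm1 s = ∑ l, s l :=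
  Finset.sum_congr rfl fun l _ => abs_of_pos (hs l (Set.mem_univ l))

lemma alpha_nonneg (r : Fin k → ℝ) (σm : Fin k → Matrix (Fin d) (Fin d) ℝ)
    {x : Fin d → ℝ} (s : Fin d → ℝ) (i : Fin k) (v : ℝ) (hx : x ∈ orthant d) :
    0 ≤ alpha r σm x s i v :=
  div_nonneg (Real.exp_nonneg _) (mul_nonneg (Real.sqrt_nonneg _)
    (Finset.prod_nonneg fun l _ => (hx l (Set.mem_univ l)).le))

lemma dot_sq (M : Matrix (Fin d) (Fin d) ℝ) (y : Fin d → ℝ) :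
    (∑ l, ∑ l', M l l' * y l * y l') = y ⬝ᵥ (M *ᵥ y) := by
  simp only [dotProduct, Matrix.mulVec, Finset.mul_sum]
  exact Finset.sum_congr rfl fun l _ => Finset.sum_congr rfl fun l' _ => by ring

lemma gauss1d_integrable (c : ℝ) :
    Integrable (fun x : ℝ => Real.exp (-(1/2 : ℝ) * x ^ 2 + c * x)) := by
  have h : ∀ x : ℝ, -(1/2 : ℝ) * x ^ 2 + c * x = c ^ 2 / 2 + (-(1/2 : ℝ) * (x - c) ^ 2) := by
    intro x; ring
  simp_rw [h, Real.exp_add]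
  exact ((integrable_exp_neg_mul_sq (by norm_num : (0:ℝ) < 1/2)).comp_sub_right c).const_mul _

lemma gauss1d_integral (c : ℝ) :
    ∫ x : ℝ, Real.exp (-(1/2 : ℝ) * x ^ 2 + c * x)
      = Real.sqrt (2 * Real.pi) * Real.exp (c ^ 2 / 2) := by
  have h : ∀ x : ℝ, -(1/2 : ℝ) * x ^ 2 + c * x = c ^ 2 / 2 + (-(1/2 : ℝ) * (x - c) ^ 2) := by
    intro x; ring
  simp_rw [h, Real.exp_add, MeasureTheory.integral_const_mul]
  rw [integral_sub_right_eq_self (fun x => Real.exp (-(1/2 : ℝ) * x ^ 2)) c,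
    integral_gaussian]
  have : Real.pi / (1/2 : ℝ) = 2 * Real.pi := by ring
  rw [this, mul_comm]

lemma moment (hσ : IsUnit (σm i).det) (hv : 0 < v) (hs : s ∈ orthant d) :
    IntegrableOn (fun x => (1 + norm1 x) * alpha r σm x s i v) (orthant d) volume ∧
    ∫ x in orthant d, (1 + norm1 x) * alpha r σm x s i v
      = 1 + Real.exp (r i * v) * ∑ l, s l := by
  classical
  have hσ0 : (σm i).det ≠ 0 := hσ.ne_zero
  have hsl : ∀ l, 0 < s l := fun l => hs l (Set.mem_univ l)
  have hsv : (0:ℝ) < Real.sqrt v := Real.sqrt_pos.2 hv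
  set G : Matrix (Fin d) (Fin d) ℝ := Real.sqrt v • σm i with hG
  have hGdet : G.det = Real.sqrt v ^ d * (σm i).det := by
    rw [hG, Matrix.det_smul, Fintype.card_fin]
  have hGdet0 : G.det ≠ 0 := by
    rw [hGdet]; exact mul_ne_zero (pow_ne_zero _ hsv.ne') hσ0
  have hGunit : IsUnit G.det := isUnit_iff_ne_zero.2 hGdet0
  have hGG : G * Gᵀ = v • amat σm i := by
    rw [hG, Matrix.transpose_smul, Matrix.smul_mul, Matrix.mul_smul, smul_smul,
      Real.mul_self_sqrt hv.le, amat]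
  have hdetvA : (v • amat σm i).det = G.det ^ 2 := by
    rw [← hGG, Matrix.det_mul, Matrix.det_transpose, sq]
  have hN : Real.sqrt ((2 * Real.pi) ^ d * (v • amat σm i).det)
      = Real.sqrt (2 * Real.pi) ^ d * |G.det| := by
    have h2π : (0:ℝ) ≤ 2 * Real.pi := by positivity
    have e1 : (Real.sqrt (2 * Real.pi) ^ d) ^ 2 = (2 * Real.pi) ^ d := by
      rw [← pow_mul, mul_comm d 2, pow_mul, Real.sq_sqrt h2π]
    have : (2 * Real.pi) ^ d * (v • amat σm i).det
        = (Real.sqrt (2 * Real.pi) ^ d * |G.det|) ^ 2 := by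
      rw [hdetvA, mul_pow (Real.sqrt (2 * Real.pi) ^ d) |G.det| 2, e1, sq_abs]
    rw [this, Real.sqrt_sq (by positivity)]
  set μv : Fin d → ℝ := fun l => (r i - (1/2 : ℝ) * amat σm i l l) * v with hμv
  set F : (Fin d → ℝ) → (Fin d → ℝ) := fun w l => s l * Real.exp (μv l + (G *ᵥ w) l) with hF
  have hFpos : ∀ w l, 0 < F w l := fun w l => mul_pos (hsl l) (Real.exp_pos _)
  have hquad : ∀ u : Fin d → ℝ,
      (∑ l, ∑ l', (v • amat σm i)⁻¹ l l' * (G *ᵥ u) l * (G *ᵥ u) l') = ∑ l, (u l) ^ 2 := by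
    intro u
    have h1 : (v • amat σm i)⁻¹ *ᵥ (G *ᵥ u) = Gᵀ⁻¹ *ᵥ u := by
      rw [← hGG, Matrix.mul_inv_rev, Matrix.mulVec_mulVec, Matrix.mul_assoc,
        Matrix.nonsing_inv_mul _ hGunit, Matrix.mul_one]
    have h2 : (G *ᵥ u) ᵥ* Gᵀ⁻¹ = u := by
      rw [← Matrix.transpose_nonsing_inv, Matrix.vecMul_transpose, Matrix.mulVec_mulVec,
        Matrix.nonsing_inv_mul _ hGunit, Matrix.one_mulVec]
    rw [dot_sq, h1, Matrix.dotProduct_mulVec, h2]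
    simp [dotProduct, sq]
  have hlog : ∀ w l, Real.log (F w l / s l) = μv l + (G *ᵥ w) l := by
    intro w l
    rw [hF]
    rw [mul_div_cancel_left₀ _ (hsl l).ne', Real.log_exp]
  have halphaF : ∀ w, alpha r σm (F w) s i v
      = Real.exp (-(1/2 : ℝ) * ∑ l, (w l) ^ 2)
        / ((Real.sqrt (2 * Real.pi) ^ d * |G.det|) * ∏ l, F w l) := by
    intro w
    rw [alpha, hN]
    congr 2
    rw [← hquad w]
    congr 1
    refine Finset.sum_congr rfl fun l _ => Finset.sum_congr rfl fun l' _ => ?_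
    rw [hlog, hlog]
    rw [hμv]
    ring
  -- the derivative
  set LG : (Fin d → ℝ) →L[ℝ] (Fin d → ℝ) :=
    LinearMap.toContinuousLinearMap (Matrix.toLin' G) with hLGdef
  have hLG : ∀ u, LG u = G *ᵥ u := by
    intro u
    simp [hLGdef, Matrix.toLin'_apply]
  set Fd : (Fin d → ℝ) → ((Fin d → ℝ) →L[ℝ] (Fin d → ℝ)) :=
    fun w => (ContinuousLinearMap.pi
      fun l => (F w l) • ContinuousLinearMap.proj l).comp LG with hFddef
  have hFderiv : ∀ w, HasFDerivAt F (Fd w) w := by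
    intro w
    have hAff : HasFDerivAt (fun w : Fin d → ℝ => μv + LG w) LG w :=
      LG.hasFDerivAt.const_add μv
    have hE : ∀ y : Fin d → ℝ, HasFDerivAt (fun y : Fin d → ℝ => fun l => s l * Real.exp (y l))
        ((ContinuousLinearMap.pi fun l =>
          (s l * Real.exp (y l)) • ContinuousLinearMap.proj l :
          (Fin d → ℝ) →L[ℝ] (Fin d → ℝ))) y := by
      intro y
      apply hasFDerivAt_pi''
      intro l
      have h1 : HasFDerivAt (fun y : Fin d → ℝ => Real.exp (y l))
          (Real.exp (y l) • ContinuousLinearMap.proj l) y :=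
        (hasFDerivAt_apply (𝕜 := ℝ) l y).exp
      have h2 := h1.const_mul (s l)
      refine h2.congr_fderiv ?_
      ext u
      simp [smul_smul, mul_assoc]
    have hcomp := (hE (μv + LG w)).comp w hAff
    have hFeq : F = (fun y : Fin d → ℝ => fun l => s l * Real.exp (y l))
        ∘ (fun w : Fin d → ℝ => μv + LG w) := by
      funext w
      simp [hF, hLG]
    rw [hFeq]
    convert hcomp using 2
    all_goals rfl
  have hFdet : ∀ w, (Fd w).det = (∏ l, F w l) * G.det := by
    intro w
    have hco : ((Fd w : (Fin d → ℝ) →L[ℝ] (Fin d → ℝ)) : (Fin d → ℝ) →ₗ[ℝ] (Fin d → ℝ))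
        = ((ContinuousLinearMap.pi fun l => (F w l) • ContinuousLinearMap.proj l :
            (Fin d → ℝ) →L[ℝ] (Fin d → ℝ)) : (Fin d → ℝ) →ₗ[ℝ] (Fin d → ℝ))
          ∘ₗ ((LG : (Fin d → ℝ) →L[ℝ] (Fin d → ℝ)) : (Fin d → ℝ) →ₗ[ℝ] (Fin d → ℝ)) := rfl
    have hP : ((ContinuousLinearMap.pi fun l => (F w l) • ContinuousLinearMap.proj l :
          (Fin d → ℝ) →L[ℝ] (Fin d → ℝ)) : (Fin d → ℝ) →ₗ[ℝ] (Fin d → ℝ))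
        = Matrix.toLin' (Matrix.diagonal fun l => F w l) := by
      apply LinearMap.ext
      intro u
      funext l
      simp [Matrix.toLin'_apply, Matrix.mulVec_diagonal]
    have hLGlin : ((LG : (Fin d → ℝ) →L[ℝ] (Fin d → ℝ)) : (Fin d → ℝ) →ₗ[ℝ] (Fin d → ℝ))
        = Matrix.toLin' G := by
      simp [hLGdef]
    rw [ContinuousLinearMap.det, hco, LinearMap.det_comp, hP, hLGlin,
      LinearMap.det_toLin', LinearMap.det_toLin', Matrix.det_diagonal]
  have hFim : F '' Set.univ = orthant d := by
    apply Set.eq_of_subset_of_subset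
    · rintro x ⟨w, -, rfl⟩
      exact fun l _ => hFpos w l
    · intro x hx
      have hxl : ∀ l, 0 < x l := fun l => hx l (Set.mem_univ l)
      refine ⟨G⁻¹ *ᵥ (fun l => Real.log (x l / s l) - μv l), Set.mem_univ _, ?_⟩
      have hGw : G *ᵥ (G⁻¹ *ᵥ (fun l => Real.log (x l / s l) - μv l))
          = fun l => Real.log (x l / s l) - μv l := by
        rw [Matrix.mulVec_mulVec, Matrix.mul_nonsing_inv _ hGunit, Matrix.one_mulVec]
      funext l
      rw [hF]
      simp only [hGw]
      rw [add_sub_cancel, Real.exp_log (div_pos (hxl l) (hsl l)), mul_comm,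
        div_mul_cancel₀ _ (hsl l).ne']
  have hFinj : Set.InjOn F Set.univ := by
    intro w _ w' _ h
    have hGw : G *ᵥ w = G *ᵥ w' := by
      funext l
      have h1 := congrFun h l
      rw [hF] at h1
      simp only at h1
      have h2 := mul_left_cancel₀ (hsl l).ne' h1
      have h3 := Real.exp_injective h2
      exact add_left_cancel h3
    have := congrArg (fun y => G⁻¹ *ᵥ y) hGw
    simpa [Matrix.mulVec_mulVec, Matrix.nonsing_inv_mul _ hGunit, Matrix.one_mulVec] using this
  -- pointwise identity for the transformed integrand
  set RHS : (Fin d → ℝ) → ℝ := fun w => (1 + ∑ l, F w l) *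
      ((Real.sqrt (2 * Real.pi) ^ d)⁻¹ * Real.exp (-(1/2 : ℝ) * ∑ l, (w l) ^ 2)) with hRHS
  have hptwise : ∀ w, |(Fd w).det| • ((1 + norm1 (F w)) * alpha r σm (F w) s i v)
      = RHS w := by
    intro w
    have hn1 : norm1 (F w) = ∑ l, F w l :=
      Finset.sum_congr rfl fun l _ => abs_of_pos (hFpos w l)
    have hprod : (0:ℝ) < ∏ l, F w l := Finset.prod_pos fun l _ => hFpos w l
    rw [smul_eq_mul, hFdet, halphaF, hn1, abs_mul, abs_of_pos hprod, hRHS]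
    have h2d : (0:ℝ) < Real.sqrt (2 * Real.pi) ^ d := by
      have : (0:ℝ) < Real.sqrt (2 * Real.pi) := Real.sqrt_pos.2 (by positivity)
      positivity
    have hGabs : (0:ℝ) < |G.det| := abs_pos.2 hGdet0
    field_simp
  -- CoV : integrability and value
  have hCoVint : IntegrableOn (fun x => (1 + norm1 x) * alpha r σm x s i v) (orthant d) volume
      ↔ Integrable RHS := by
    rw [← hFim, integrableOn_image_iff_integrableOn_abs_det_fderiv_smul volume
      MeasurableSet.univ (fun w _ => (hFderiv w).hasFDerivWithinAt) hFinj]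
    rw [show (fun x => |(Fd x).det| • ((1 + norm1 (F x)) * alpha r σm (F x) s i v)) = RHS
      from funext hptwise]
    exact integrableOn_univ
  have hCoVeq : ∫ x in orthant d, (1 + norm1 x) * alpha r σm x s i v = ∫ w, RHS w := by
    rw [← hFim, integral_image_eq_integral_abs_det_fderiv_smul volume
      MeasurableSet.univ (fun w _ => (hFderiv w).hasFDerivWithinAt) hFinj]
    rw [show (fun x => |(Fd x).det| • ((1 + norm1 (F x)) * alpha r σm (F x) s i v)) = RHS
      from funext hptwise]
    exact setIntegral_univ
  -- decompose the transformed integrand into products of 1d gaussians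
  set q : ℝ → ℝ → ℝ := fun c x => (Real.sqrt (2 * Real.pi))⁻¹
      * Real.exp (-(1/2 : ℝ) * x ^ 2 + c * x) with hq
  have hsqrt2π : (0:ℝ) < Real.sqrt (2 * Real.pi) := Real.sqrt_pos.2 (by positivity)
  have hqint : ∀ c, Integrable (q c) := fun c => (gauss1d_integrable c).const_mul _
  have hqval : ∀ c, ∫ x, q c x = Real.exp (c ^ 2 / 2) := by
    intro c
    rw [hq]
    simp only
    rw [MeasureTheory.integral_const_mul, gauss1d_integral,
      ← mul_assoc, inv_mul_cancel₀ hsqrt2π.ne', one_mul]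
  have hprodq : ∀ (c : Fin d → ℝ) (w : Fin d → ℝ),
      (∏ l, q (c l) (w l)) = ((Real.sqrt (2 * Real.pi)) ^ d)⁻¹
        * Real.exp (∑ l, (-(1/2 : ℝ) * (w l) ^ 2 + c l * w l)) := by
    intro c w
    rw [hq]
    simp only
    rw [Finset.prod_mul_distrib, Finset.prod_const, Real.exp_sum, Finset.card_fin, inv_pow]
  have hdecomp : RHS = fun w => (∏ l, q 0 (w l))
      + ∑ l, (s l * Real.exp (μv l)) * ∏ l', q (G l l') (w l') := by
    funext w
    have p0 : (∏ l, q (0 : ℝ) (w l))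
        = ((Real.sqrt (2 * Real.pi)) ^ d)⁻¹ * Real.exp (-(1/2 : ℝ) * ∑ l, (w l) ^ 2) := by
      rw [hprodq (fun _ => (0:ℝ)) w]
      congr 1
      rw [Finset.mul_sum]
      exact congrArg Real.exp (Finset.sum_congr rfl fun l _ => by ring)
    have pl : ∀ l, (s l * Real.exp (μv l)) * ∏ l', q (G l l') (w l')
        = F w l * (((Real.sqrt (2 * Real.pi)) ^ d)⁻¹
            * Real.exp (-(1/2 : ℝ) * ∑ l', (w l') ^ 2)) := by
      intro l
      rw [hprodq (fun l' => G l l') w]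
      have hGl : (G *ᵥ w) l = ∑ l', G l l' * w l' := by
        simp [Matrix.mulVec, dotProduct]
      have : (∑ l', (-(1/2 : ℝ) * (w l') ^ 2 + G l l' * w l'))
          = (-(1/2 : ℝ) * ∑ l', (w l') ^ 2) + (G *ᵥ w) l := by
        rw [Finset.sum_add_distrib, hGl, Finset.mul_sum]
      rw [this, Real.exp_add, hF]
      simp only
      rw [Real.exp_add]
      ring
    rw [hRHS]
    simp only
    rw [p0, add_mul, one_mul, Finset.sum_mul]
    congr 1
    exact Finset.sum_congr rfl fun l _ => (pl l).symm
  have hint0 : Integrable (fun w : Fin d → ℝ => ∏ l, q 0 (w l)) :=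
    Integrable.fintype_prod fun _ => hqint 0
  have hintl : ∀ l : Fin d, Integrable (fun w : Fin d → ℝ =>
      (s l * Real.exp (μv l)) * ∏ l', q (G l l') (w l')) := fun l =>
    (Integrable.fintype_prod fun l' => hqint (G l l')).const_mul _
  have hintRHS : Integrable RHS := by
    rw [hdecomp]
    exact hint0.add (integrable_finset_sum _ fun l _ => hintl l)
  have hμsum : ∀ l, μv l + (∑ l', (G l l') ^ 2) / 2 = r i * v := by
    intro l
    have hterm : ∀ l', (G l l') ^ 2 = v * (σm i l l' * σm i l l') := by
      intro l'
      rw [hG]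
      simp only [Matrix.smul_apply, smul_eq_mul]
      rw [mul_pow, Real.sq_sqrt hv.le]
      ring
    have hGA : (∑ l', (G l l') ^ 2) = v * amat σm i l l := by
      rw [Finset.sum_congr rfl fun l' _ => hterm l', ← Finset.mul_sum]
      congr 1
    rw [hGA, hμv]
    ring
  have hvalRHS : ∫ w, RHS w = 1 + Real.exp (r i * v) * ∑ l, s l := by
    rw [hdecomp]
    rw [integral_add hint0 (integrable_finset_sum _ fun l _ => hintl l),
      integral_finset_sum _ fun l _ => hintl l]
    have e0 : ∫ w : Fin d → ℝ, ∏ l, q 0 (w l) = 1 := by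
      rw [integral_fintype_prod_volume_eq_prod (f := fun _ => q 0)]
      simp [hqval]
    have el : ∀ l : Fin d, ∫ w : Fin d → ℝ,
        (s l * Real.exp (μv l)) * ∏ l', q (G l l') (w l') = s l * Real.exp (r i * v) := by
      intro l
      rw [MeasureTheory.integral_const_mul,
        integral_fintype_prod_volume_eq_prod (f := fun l' => q (G l l'))]
      rw [Finset.prod_congr rfl fun l' _ => hqval (G l l'), ← Real.exp_sum]
      rw [mul_assoc, ← Real.exp_add]
      rw [show (∑ l', (G l l') ^ 2 / 2) = (∑ l', (G l l') ^ 2) / 2 from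
        (Finset.sum_div _ _ _).symm, hμsum l]
    rw [e0, Finset.sum_congr rfl fun l _ => el l, ← Finset.sum_mul, mul_comm]
  exact ⟨hCoVint.2 hintRHS, by rw [hCoVeq, hvalRHS]⟩
end AuxMoment

lemma moment_le {d k : ℕ} (r : Fin k → ℝ) (σm : Fin k → Matrix (Fin d) (Fin d) ℝ)
    (i : Fin k) {v : ℝ} {s : Fin d → ℝ} (hσ : IsUnit (σm i).det) (hv : 0 < v) (hs : s ∈ orthant d) (hri : 0 ≤ r i) :
    ∫ x in orthant d, (1 + norm1 x) * alpha r σm x s i v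
      ≤ Real.exp (r i * v) * (1 + norm1 s) := by
  rw [(moment r σm i hσ hv hs).2, norm1_eq_sum hs]
  have h1 : (1:ℝ) ≤ Real.exp (r i * v) := Real.one_le_exp (mul_nonneg hri hv.le)
  have h2 : 0 ≤ ∑ l, s l := Finset.sum_nonneg fun l _ => (hs l (Set.mem_univ l)).le
  nlinarith

end

theorem stmt_11 (d k : ℕ) (hd : 1 ≤ d) (hk : 0 < k)
    (r : Fin k → ℝ) (hr : ∀ i, 0 ≤ r i)
    (σm : Fin k → Matrix (Fin d) (Fin d) ℝ) (hσ : ∀ i, IsUnit (σm i).det)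
    (Λ : Fin k → Fin k → ℝ) (hΛ1 : ∀ i j, i ≠ j → 0 ≤ Λ i j)
    (hΛ2 : ∀ i : Fin k, ∑ j, Λ i j = 0)
    (T : ℝ) (hT : 0 < T)
    (K : (Fin d → ℝ) → ℝ) (hK0 : ∀ s ∈ orthant d, 0 ≤ K s)
    (c : NNReal) (hKlip : LipschitzOnWith c K (orthant d))
    (φ : ℝ → (Fin d → ℝ) → Fin k → ℝ)
    (hφV : MemV T φ) (hφIE : SolvesIE r σm Λ K T φ) :
    (∀ t ∈ Set.Ioo (0:ℝ) T, ∀ s ∈ orthant d, ∀ i : Fin k, 0 ≤ φ t s i) ∧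
    ∃ M : ℝ, ∀ t ∈ Set.Ioo (0:ℝ) T, ∀ s ∈ orthant d, ∀ i : Fin k,
      |φ t s i| ≤ M * (1 + norm1 s) := by
  classical
  obtain ⟨-, M, hM⟩ := hφV
  refine ⟨?_, M, hM⟩
  set M₁ := |M| with hM₁
  have hM₁n : (0:ℝ) ≤ M₁ := abs_nonneg M
  have hbound : ∀ t ∈ Set.Ioo (0:ℝ) T, ∀ s ∈ orthant d, ∀ i : Fin k,
      |φ t s i| ≤ M₁ * (1 + norm1 s) := by
    intro t ht s hs i
    refine (hM t ht s hs i).trans (mul_le_mul_of_nonneg_right (le_abs_self M) ?_)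
    have := norm1_nonneg s; linarith
  set C := ∑ i' : Fin k, ∑ j' : Fin k, |Λ i' j'| with hC
  have hC0 : (0:ℝ) ≤ C :=
    Finset.sum_nonneg fun _ _ => Finset.sum_nonneg fun _ _ => abs_nonneg _
  have hlamsum : ∀ i : Fin k,
      (∑ j ∈ Finset.univ.filter (fun j => j ≠ i), Λ i j) = -Λ i i := by
    intro i
    have hsplit := Finset.sum_filter_add_sum_filter_not Finset.univ
      (fun j => j ≠ i) (fun j => Λ i j)
    have h2 : (∑ j ∈ Finset.univ.filter (fun j => ¬ j ≠ i), Λ i j) = Λ i i := by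
      have : Finset.univ.filter (fun j : Fin k => ¬ j ≠ i) = {i} := by
        ext j; simp
      rw [this, Finset.sum_singleton]
    have h3 := hΛ2 i
    rw [h2] at hsplit
    linarith
  have hlam_nonneg : ∀ i : Fin k, (0:ℝ) ≤ -Λ i i := by
    intro i
    rw [← hlamsum i]
    exact Finset.sum_nonneg fun j hj =>
      hΛ1 i j (Ne.symm (Finset.mem_filter.mp hj).2)
  have hlamC : ∀ i : Fin k, -Λ i i ≤ C := by
    intro i
    calc -Λ i i ≤ |Λ i i| := neg_le_abs (Λ i i)
    _ ≤ ∑ j' : Fin k, |Λ i j'| :=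
        Finset.single_le_sum (f := fun j' => |Λ i j'|)
          (fun j _ => abs_nonneg _) (Finset.mem_univ i)
    _ ≤ C :=
        Finset.single_le_sum (f := fun i' => ∑ j' : Fin k, |Λ i' j'|)
          (fun i' _ => Finset.sum_nonneg fun _ _ => abs_nonneg _) (Finset.mem_univ i)
  have main : ∀ n : ℕ, ∀ t ∈ Set.Ioo (0:ℝ) T, ∀ s ∈ orthant d, ∀ i : Fin k,
      -(M₁ * (C * (T - t)) ^ n / n.factorial * (1 + norm1 s)) ≤ φ t s i := by
    intro n
    induction n with
    | zero =>
      intro t ht s hs i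
      have h1 := (abs_le.mp (hbound t ht s hs i)).1
      simpa using h1
    | succ n ih =>
      intro t ht s hs i
      obtain ⟨ht0, htT⟩ := ht
      have hw0 : (0:ℝ) < T - t := by linarith
      have hS0 : (0:ℝ) ≤ 1 + norm1 s := by have := norm1_nonneg s; linarith
      -- the eta term is nonnegative
      have hetapos : 0 ≤ Real.exp (-(-(Λ i i)) * (T - t)) * eta r σm K T i t s := by
        apply mul_nonneg (Real.exp_nonneg _)
        rw [eta, if_pos htT]
        apply mul_nonneg (Real.exp_nonneg _)
        apply MeasureTheory.setIntegral_nonneg measurableSet_orthant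
        intro x hx
        exact mul_nonneg (hK0 x hx) (alpha_nonneg r σm s i (T - t) hx)
      set Q : ℝ → ℝ := fun u => M₁ * (C * (T - t - u)) ^ n / n.factorial * (1 + norm1 s)
        with hQ
      have hQ0 : ∀ u ∈ Set.Icc (0:ℝ) (T - t), 0 ≤ Q u := by
        intro u hu
        rw [hQ]
        have h1 : (0:ℝ) ≤ T - t - u := by linarith [hu.2]
        positivity
      -- inner integral lower bound
      have hinner : ∀ u ∈ Set.Ioo (0:ℝ) (T - t), ∀ j : Fin k,
          -(Real.exp (r i * u) * Q u)
            ≤ ∫ x in orthant d, φ (t + u) x j * alpha r σm x s i u := by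
        intro u hu j
        have hu0 : (0:ℝ) < u := hu.1
        have htu : t + u ∈ Set.Ioo (0:ℝ) T := ⟨by linarith, by linarith [hu.2]⟩
        have hmom := moment r σm i (hσ i) hu0 hs
        set D := M₁ * (C * (T - t - u)) ^ n / n.factorial with hD
        have hD0 : (0:ℝ) ≤ D := by
          rw [hD]
          have h1 : (0:ℝ) ≤ T - t - u := by linarith [hu.2]
          positivity
        have hg_int : IntegrableOn
            (fun x => D * ((1 + norm1 x) * alpha r σm x s i u)) (orthant d) volume :=
          hmom.1.const_mul D
        have hgval : ∫ x in orthant d, D * ((1 + norm1 x) * alpha r σm x s i u)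
            = D * (1 + Real.exp (r i * u) * ∑ l, s l) := by
          rw [MeasureTheory.integral_const_mul, hmom.2]
        have hQD : Q u = D * (1 + ∑ l, s l) := by
          rw [hQ, hD, norm1_eq_sum hs]
        have hgle : D * (1 + Real.exp (r i * u) * ∑ l, s l) ≤ Real.exp (r i * u) * Q u := by
          have h1 : (1:ℝ) ≤ Real.exp (r i * u) := Real.one_le_exp (mul_nonneg (hr i) hu0.le)
          have h2 : (0:ℝ) ≤ ∑ l, s l :=
            Finset.sum_nonneg fun l _ => (hs l (Set.mem_univ l)).le
          rw [hQD]
          nlinarith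
        have hpt : ∀ x ∈ orthant d,
            0 ≤ (φ (t + u) x j + D * (1 + norm1 x)) * alpha r σm x s i u := by
          intro x hx
          apply mul_nonneg _ (alpha_nonneg r σm s i u hx)
          have hih := ih (t + u) htu x hx j
          have h3 : T - (t + u) = T - t - u := by ring
          rw [h3] at hih
          have : M₁ * (C * (T - t - u)) ^ n / ↑n.factorial * (1 + norm1 x)
              = D * (1 + norm1 x) := by rw [hD]
          rw [this] at hih
          linarith
        by_cases hint : IntegrableOn
            (fun x => φ (t + u) x j * alpha r σm x s i u) (orthant d) volume
        · have hsplit : ∫ x in orthant d,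
              (φ (t + u) x j + D * (1 + norm1 x)) * alpha r σm x s i u
              = (∫ x in orthant d, φ (t + u) x j * alpha r σm x s i u)
                + ∫ x in orthant d, D * ((1 + norm1 x) * alpha r σm x s i u) := by
            rw [← MeasureTheory.integral_add hint hg_int]
            congr 1
            funext x
            ring
          have hnn : 0 ≤ ∫ x in orthant d,
              (φ (t + u) x j + D * (1 + norm1 x)) * alpha r σm x s i u :=
            MeasureTheory.setIntegral_nonneg measurableSet_orthant hpt
          rw [hsplit, hgval] at hnn
          linarith
        · rw [MeasureTheory.integral_undef hint]
          have h4 : 0 ≤ Real.exp (r i * u) * Q u :=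
            mul_nonneg (Real.exp_nonneg _) (hQ0 u ⟨hu0.le, hu.2.le⟩)
          linarith
      -- outer integral
      set h : ℝ → ℝ := fun u => Real.exp (-(-(Λ i i) + r i) * u) *
          ∑ j ∈ Finset.univ.filter (fun j => j ≠ i), Λ i j *
            ∫ x in orthant d, φ (t + u) x j * alpha r σm x s i u with hh
      set b : ℝ → ℝ := fun u => Real.exp (-(-(Λ i i)) * u) * ((-(Λ i i)) * Q u) with hb
      have hbcont : Continuous b := by
        rw [hb, hQ]
        fun_prop
      have hbint : IntervalIntegrable b volume 0 (T - t) := hbcont.intervalIntegrable 0 (T - t)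
      have hb0 : ∀ u ∈ Set.Icc (0:ℝ) (T - t), 0 ≤ b u := by
        intro u hu
        rw [hb]
        exact mul_nonneg (Real.exp_nonneg _) (mul_nonneg (hlam_nonneg i) (hQ0 u hu))
      have hintb_nonneg : 0 ≤ ∫ u in (0:ℝ)..(T - t), b u :=
        intervalIntegral.integral_nonneg hw0.le hb0
      have hhb : ∀ u ∈ Set.Ioo (0:ℝ) (T - t), 0 ≤ h u + b u := by
        intro u hu
        simp only [hh, hb]
        have e1 : Real.exp (-(-(Λ i i)) * u)
            = Real.exp (-(-(Λ i i) + r i) * u) * Real.exp (r i * u) := by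
          rw [← Real.exp_add]
          ring_nf
        rw [e1]
        have key : Real.exp (-(-(Λ i i) + r i) * u) *
              (∑ j ∈ Finset.univ.filter (fun j => j ≠ i), Λ i j *
                ∫ x in orthant d, φ (t + u) x j * alpha r σm x s i u)
            + Real.exp (-(-(Λ i i) + r i) * u) * Real.exp (r i * u) * (-Λ i i * Q u)
            = Real.exp (-(-(Λ i i) + r i) * u) *
              (∑ j ∈ Finset.univ.filter (fun j => j ≠ i), Λ i j *
                ((∫ x in orthant d, φ (t + u) x j * alpha r σm x s i u)
                  + Real.exp (r i * u) * Q u)) := by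
          simp_rw [mul_add]
          rw [Finset.sum_add_distrib]
          have : (∑ j ∈ Finset.univ.filter (fun j => j ≠ i),
              Λ i j * (Real.exp (r i * u) * Q u))
              = (-Λ i i) * (Real.exp (r i * u) * Q u) := by
            rw [← Finset.sum_mul, hlamsum i]
          rw [this]
          ring
        rw [key]
        apply mul_nonneg (Real.exp_nonneg _)
        apply Finset.sum_nonneg
        intro j hj
        apply mul_nonneg (hΛ1 i j (Ne.symm (Finset.mem_filter.mp hj).2))
        have := hinner u hu j
        linarith
      have houter : -(∫ u in (0:ℝ)..(T - t), b u) ≤ ∫ u in (0:ℝ)..(T - t), h u := by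
        by_cases hh_int : IntervalIntegrable h volume 0 (T - t)
        · have hplus : 0 ≤ ∫ u in (0:ℝ)..(T - t), (h u + b u) := by
            rw [intervalIntegral.integral_of_le hw0.le,
              MeasureTheory.integral_Ioc_eq_integral_Ioo]
            exact MeasureTheory.setIntegral_nonneg measurableSet_Ioo hhb
          rw [intervalIntegral.integral_add hh_int hbint] at hplus
          linarith
        · rw [intervalIntegral.integral_undef hh_int]
          linarith
      have hbbound : ∫ u in (0:ℝ)..(T - t), b u
          ≤ M₁ * (C * (T - t)) ^ (n + 1) / (n + 1).factorial * (1 + norm1 s) := by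
        set c1 := C * (M₁ * C ^ n / n.factorial * (1 + norm1 s)) with hc1
        have hble : ∀ u ∈ Set.Icc (0:ℝ) (T - t), b u ≤ c1 * (T - t - u) ^ n := by
          intro u hu
          have h1 : Real.exp (-(-(Λ i i)) * u) ≤ 1 := by
            rw [Real.exp_le_one_iff]
            nlinarith [hlam_nonneg i, hu.1]
          have h2 : 0 ≤ Q u := hQ0 u hu
          have h3 : b u ≤ (-Λ i i) * Q u := by
            simp only [hb]
            calc Real.exp (-(-Λ i i) * u) * (-Λ i i * Q u)
                ≤ 1 * (-Λ i i * Q u) :=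
                  mul_le_mul_of_nonneg_right h1 (mul_nonneg (hlam_nonneg i) h2)
            _ = -Λ i i * Q u := one_mul _
          have h4 : (-Λ i i) * Q u ≤ C * Q u :=
            mul_le_mul_of_nonneg_right (hlamC i) h2
          have h5 : C * Q u = c1 * (T - t - u) ^ n := by
            simp only [hQ, hc1]
            rw [mul_pow]
            ring
          linarith
        have hc1cont : Continuous fun u : ℝ => c1 * (T - t - u) ^ n := by fun_prop
        have hstep : ∫ u in (0:ℝ)..(T - t), b u
            ≤ ∫ u in (0:ℝ)..(T - t), c1 * (T - t - u) ^ n :=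
          intervalIntegral.integral_mono_on hw0.le hbint
            (hc1cont.intervalIntegrable 0 (T - t)) hble
        have hval : ∫ u in (0:ℝ)..(T - t), c1 * (T - t - u) ^ n
            = c1 * ((T - t) ^ (n + 1) / (n + 1)) := by
          rw [intervalIntegral.integral_const_mul]
          congr 1
          rw [intervalIntegral.integral_comp_sub_left (fun x => x ^ n) (T - t)]
          simp only [sub_self, sub_zero]
          rw [integral_pow]
          rw [zero_pow (Nat.succ_ne_zero n)]
          push_cast
          ring
        have hfact : ((n + 1).factorial : ℝ) = (n + 1) * n.factorial := by
          push_cast [Nat.factorial_succ]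
          ring
        have hfac0 : (0:ℝ) < n.factorial := by positivity
        have : c1 * ((T - t) ^ (n + 1) / (n + 1))
            = M₁ * (C * (T - t)) ^ (n + 1) / (n + 1).factorial * (1 + norm1 s) := by
          rw [hc1, hfact, mul_pow]
          field_simp
          ring
        linarith
      have hIE := hφIE t ⟨ht0, htT⟩ s hs i
      rw [Aop] at hIE
      have hIE2 : φ t s i = Real.exp (-(-(Λ i i)) * (T - t)) * eta r σm K T i t s
          + ∫ u in (0:ℝ)..(T - t), h u := hIE
      rw [hIE2]
      linarith
  intro t ht s hs i
  have hlim : Tendsto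
      (fun n : ℕ => M₁ * (C * (T - t)) ^ n / n.factorial * (1 + norm1 s)) atTop (nhds 0) := by
    have h1 := FloorSemiring.tendsto_pow_div_factorial_atTop (K := ℝ) (C * (T - t))
    have h2 := (h1.const_mul M₁).mul_const (1 + norm1 s)
    simp only [mul_zero, zero_mul] at h2
    convert h2 using 2 with n
    ring
  have hneg : Tendsto
      (fun n : ℕ => -(M₁ * (C * (T - t)) ^ n / n.factorial * (1 + norm1 s))) atTop (nhds 0) := by
    have := hlim.neg
    simpa using this
  exact le_of_tendsto hneg (Filter.Eventually.of_forall fun n => main n t ht s hs i)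
end

section
/- Fix l ∈ {1,…,d} and suppose D_l := min_{i∈X}(a_{ll}(i) − 2r(i)) > 0. Set γ_l = 1/(2 max_{i∈X} a_{ll}(i)) and k_l = exp(max_{i∈X} a_{ll}(i) / D_l). Then for every ε_l > 0, the function y_l(t,s,i) = (T+ε_l−t)^{−1/2} exp(−γ_l (ln(s_l/(k_l s_l^u)))²/(T+ε_l−t)) satisfies ∂y_l/∂t(t,s,i) + L y_l(t,s,i) ≤ 0 for all (t,s,i) ∈ (0,T) × R × X. -/
open MeasureTheory Real Filter Matrix

noncomputable section

/-- The spatial operator `𝕃`. -/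
def Lop {d k : ℕ} (r : Fin k → ℝ) (σm : Fin k → Matrix (Fin d) (Fin d) ℝ)
    (Λ : Fin k → Fin k → ℝ) (φ : ℝ → (Fin d → ℝ) → Fin k → ℝ)
    (t : ℝ) (s : Fin d → ℝ) (i : Fin k) : ℝ :=
  r i * ∑ l, s l * pd l (fun s' => φ t s' i) s
  + (1/2 : ℝ) * ∑ l, ∑ l',
      amat σm i l l' * s l * s l' * pd l (pd l' (fun s' => φ t s' i)) s
  - r i * φ t s i + ∑ j, Λ i j * φ t s j

/-- The open box `R = Π_l (s_l^b, s_l^u)`. -/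
def Rset {d : ℕ} (sb su : Fin d → ℝ) : Set (Fin d → ℝ) :=
  Set.univ.pi fun l => Set.Ioo (sb l) (su l)

/-- The barrier function `y_l(t,s) = (T+ε_l−t)^{-1/2} exp(−γ_l (ln(s_l/(k_l s_l^u)))²/(T+ε_l−t))`. -/
def yl {d : ℕ} (T εl γl kl slu : ℝ) (l : Fin d) (t : ℝ) (s : Fin d → ℝ) : ℝ :=
  (Real.sqrt (T + εl - t))⁻¹ *
    Real.exp (-γl * (Real.log (s l / (kl * slu)))^2 / (T + εl - t))

lemma hasDerivAt_logdiv (K : ℝ) (hK : 0 < K) {c : ℝ} (hc : 0 < c) :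
    HasDerivAt (fun c => Real.log (c / K)) c⁻¹ c := by
  have h := ((hasDerivAt_id c).div_const K).log (by positivity)
  refine h.congr_deriv ?_
  simp only [id]
  field_simp

lemma hasDerivAt_G (A γ τ K : ℝ) (hK : 0 < K) {c : ℝ} (hc : 0 < c) :
    HasDerivAt (fun c => A * Real.exp (-γ * (Real.log (c/K))^2 / τ))
      ((A * Real.exp (-γ * (Real.log (c/K))^2 / τ)) * (-2*γ*Real.log (c/K)/(τ*c))) c := by
  have h1 : HasDerivAt (fun c => -γ * (Real.log (c/K))^2 / τ)
      (-γ * (2 * Real.log (c/K) * c⁻¹) / τ) c := by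
    exact (((hasDerivAt_logdiv K hK hc).pow 2).const_mul (-γ)).div_const τ |>.congr_deriv (by ring)
  have h2 := (h1.exp).const_mul A
  refine h2.congr_deriv ?_
  field_simp

lemma hasDerivAt_phi (γ τ K : ℝ) (hτ : τ ≠ 0) (hK : 0 < K) {c : ℝ} (hc : 0 < c) :
    HasDerivAt (fun c => -2*γ*Real.log (c/K)/(τ*c))
      ((2*γ*Real.log (c/K) - 2*γ)/(τ*c^2)) c := by
  have hn : HasDerivAt (fun c => -2*γ*Real.log (c/K)) (-2*γ*c⁻¹) c :=
    (hasDerivAt_logdiv K hK hc).const_mul (-2*γ)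
  have hdden : HasDerivAt (fun c : ℝ => τ * c) τ c := by
    simpa using (hasDerivAt_id c).const_mul τ
  have h := hn.div hdden (by positivity)
  refine h.congr_deriv ?_
  field_simp
  ring

lemma hasDerivAt_Gd (A γ τ K : ℝ) (hτ : τ ≠ 0) (hK : 0 < K) {c : ℝ} (hc : 0 < c) :
    HasDerivAt (fun c => (A * Real.exp (-γ * (Real.log (c/K))^2 / τ)) * (-2*γ*Real.log (c/K)/(τ*c)))
      ((A * Real.exp (-γ * (Real.log (c/K))^2 / τ)) *
        ((4*γ^2*(Real.log (c/K))^2 - 2*γ*τ + 2*γ*τ*Real.log (c/K))/(τ^2*c^2))) c := by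
  have h := (hasDerivAt_G A γ τ K hK hc).mul (hasDerivAt_phi γ τ K hτ hK hc)
  refine h.congr_deriv ?_
  field_simp
  ring

lemma hasDerivAt_time (T ε γ u : ℝ) {t : ℝ} (hτ : 0 < T + ε - t) :
    HasDerivAt (fun t' => (Real.sqrt (T + ε - t'))⁻¹ * Real.exp (-γ * u^2 / (T + ε - t')))
      ((Real.sqrt (T + ε - t))⁻¹ * Real.exp (-γ * u^2 / (T + ε - t)) *
        (1/(2*(T+ε-t)) - γ*u^2/(T+ε-t)^2)) t := by
  have hτmap : HasDerivAt (fun t' : ℝ => T + ε - t') (-1) t := by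
    simpa using (hasDerivAt_id t).const_sub (T + ε)
  have hs0 : Real.sqrt (T + ε - t) ≠ 0 := by positivity
  have hsqrt : HasDerivAt (fun t' => Real.sqrt (T + ε - t'))
      (1 / (2 * Real.sqrt (T + ε - t)) * (-1)) t :=
    (Real.hasDerivAt_sqrt hτ.ne').comp t hτmap
  have hinv := hsqrt.inv hs0
  have hexp : HasDerivAt (fun t' => Real.exp (-γ * u^2 / (T + ε - t')))
      (Real.exp (-γ * u^2 / (T + ε - t)) *
        ((0 * (T + ε - t) - (-γ * u^2) * (-1)) / (T + ε - t)^2)) t := by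
    exact (((hasDerivAt_const t (-γ * u^2)).div hτmap hτ.ne').exp)
  have h := hinv.mul hexp
  refine h.congr_deriv ?_
  simp only [Pi.inv_apply]
  have hq : Real.sqrt (T + ε - t) ^ 2 = T + ε - t := Real.sq_sqrt hτ.le
  field_simp
  nlinarith [hq, Real.exp_pos (-γ * u^2 / (T + ε - t)), Real.sqrt_pos.2 hτ]

theorem stmt_15 (d k : ℕ) (hd : 1 ≤ d) (hk : 0 < k)
    (r : Fin k → ℝ) (hr : ∀ i, 0 ≤ r i)
    (σm : Fin k → Matrix (Fin d) (Fin d) ℝ) (hσ : ∀ i, IsUnit (σm i).det)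
    (Λ : Fin k → Fin k → ℝ) (hΛ1 : ∀ i j, i ≠ j → 0 ≤ Λ i j)
    (hΛ2 : ∀ i : Fin k, ∑ j, Λ i j = 0)
    (T : ℝ) (hT : 0 < T)
    (sb su : Fin d → ℝ) (hbu : ∀ l, 0 ≤ sb l ∧ sb l < su l)
    (l : Fin d)
    (Dl : ℝ)
    (hDl : Dl = Finset.univ.inf' ⟨⟨0, hk⟩, Finset.mem_univ _⟩
        (fun i : Fin k => amat σm i l l - 2 * r i))
    (hDpos : 0 < Dl)
    (amax : ℝ)
    (hamax : amax = Finset.univ.sup' ⟨⟨0, hk⟩, Finset.mem_univ _⟩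
        (fun i : Fin k => amat σm i l l))
    (γl kl : ℝ) (hγl : γl = 1 / (2 * amax)) (hkl : kl = Real.exp (amax / Dl)) :
    ∀ εl : ℝ, 0 < εl → ∀ t ∈ Set.Ioo (0:ℝ) T, ∀ s ∈ Rset sb su, ∀ i : Fin k,
      deriv (fun t' => yl T εl γl kl (su l) l t' s) t
        + Lop r σm Λ (fun t'' s'' _ => yl T εl γl kl (su l) l t'' s'') t s i ≤ 0 := by
  intro ε hε t ht s hs i
  obtain ⟨ht0, htT⟩ := ht
  have hτ : 0 < T + ε - t := by linarith
  have hτ' : (T + ε - t) ≠ 0 := hτ.ne'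
  have hsu : 0 < su l := lt_of_le_of_lt (hbu l).1 (hbu l).2
  have hklpos : 0 < kl := by rw [hkl]; exact Real.exp_pos _
  have hK : 0 < kl * su l := mul_pos hklpos hsu
  have hsmem : s l ∈ Set.Ioo (sb l) (su l) := hs l (Set.mem_univ l)
  have hsl : 0 < s l := lt_of_le_of_lt (hbu l).1 hsmem.1
  have hslu : s l < su l := hsmem.2
  -- matrix entry facts
  have hDle : Dl ≤ amat σm i l l - 2 * r i := by
    rw [hDl]; exact Finset.inf'_le _ (Finset.mem_univ i)
  have hale : amat σm i l l ≤ amax := by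
    rw [hamax]
    exact Finset.le_sup' (fun i : Fin k => amat σm i l l) (Finset.mem_univ i)
  have hapos : 0 < amat σm i l l := by nlinarith [hr i]
  have hamaxpos : 0 < amax := lt_of_lt_of_le hapos hale
  have hγpos : 0 < γl := by rw [hγl]; positivity
  -- log bound
  have hu : Real.log (s l / (kl * su l)) ≤ -(amax / Dl) := by
    have h1 : s l / (kl * su l) < kl⁻¹ := by
      rw [div_lt_iff₀ hK]
      rw [show kl⁻¹ * (kl * su l) = su l by field_simp]
      exact hslu
    have h2 := Real.log_lt_log (by positivity) h1
    have h3 : Real.log kl⁻¹ = -(amax / Dl) := by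
      rw [Real.log_inv, hkl, Real.log_exp]
    rw [h3] at h2
    exact h2.le
  have hu0 : Real.log (s l / (kl * su l)) ≤ 0 := by
    have : 0 < amax / Dl := by positivity
    linarith
  have hua : Real.log (s l / (kl * su l)) * (amat σm i l l - 2 * r i) ≤ -amax := by
    have h1 : Real.log (s l / (kl * su l)) * Dl ≤ -amax := by
      have h0 := mul_le_mul_of_nonneg_right hu hDpos.le
      have h0' : -(amax / Dl) * Dl = -amax := by field_simp
      rw [h0'] at h0
      exact h0
    have h2 := mul_le_mul_of_nonpos_left hDle hu0
    linarith
  -- abbreviations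
  set τ : ℝ := T + ε - t with hτdef
  set u : ℝ := Real.log (s l / (kl * su l)) with hudef
  set Y : ℝ := (Real.sqrt τ)⁻¹ * Real.exp (-γl * u^2 / τ) with hYdef
  have hYpos : 0 < Y := by
    rw [hYdef]
    have : 0 < Real.sqrt τ := Real.sqrt_pos.2 hτ
    positivity
  -- time derivative
  have hYt : deriv (fun t' => yl T ε γl kl (su l) l t' s) t
      = Y * (1/(2*τ) - γl*u^2/τ^2) := by
    simp only [yl]
    exact (hasDerivAt_time T ε γl (Real.log (s l / (kl * su l))) hτ).deriv
  -- first spatial derivative, nonzero only in coordinate l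
  have hpd0 : ∀ m : Fin d, m ≠ l → ∀ s' : Fin d → ℝ,
      pd m (fun s'' => yl T ε γl kl (su l) l t s'') s' = 0 := by
    intro m hm s'
    unfold pd yl
    have heq : (fun c => (Real.sqrt (T + ε - t))⁻¹ *
        Real.exp (-γl * (Real.log ((Function.update s' m c) l / (kl * su l)))^2 / (T + ε - t)))
        = fun _ => (Real.sqrt (T + ε - t))⁻¹ *
        Real.exp (-γl * (Real.log (s' l / (kl * su l)))^2 / (T + ε - t)) := by
      funext c
      rw [Function.update_of_ne (Ne.symm hm)]
    rw [heq, deriv_const]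
  have hpdl : ∀ s' : Fin d → ℝ, 0 < s' l →
      pd l (fun s'' => yl T ε γl kl (su l) l t s'') s'
        = ((Real.sqrt (T + ε - t))⁻¹ *
            Real.exp (-γl * (Real.log (s' l / (kl * su l)))^2 / (T + ε - t))) *
          (-2*γl*Real.log (s' l / (kl * su l))/((T + ε - t) * s' l)) := by
    intro s' hs'
    unfold pd yl
    have heq : (fun c => (Real.sqrt (T + ε - t))⁻¹ *
        Real.exp (-γl * (Real.log ((Function.update s' l c) l / (kl * su l)))^2 / (T + ε - t)))
        = fun c => (Real.sqrt (T + ε - t))⁻¹ *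
        Real.exp (-γl * (Real.log (c / (kl * su l)))^2 / (T + ε - t)) := by
      funext c
      rw [Function.update_self]
    rw [heq]
    exact (hasDerivAt_G ((Real.sqrt (T + ε - t))⁻¹) γl (T + ε - t) (kl * su l) hK hs').deriv
  -- second derivatives
  have hpdinner : ∀ (m m' : Fin d), m' ≠ l →
      pd m (pd m' (fun s'' => yl T ε γl kl (su l) l t s'')) s = 0 := by
    intro m m' hm'
    have heq : (fun c => pd m' (fun s'' => yl T ε γl kl (su l) l t s'')
        (Function.update s m c)) = fun _ => (0:ℝ) := by
      funext c
      exact hpd0 m' hm' _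
    calc pd m (pd m' (fun s'' => yl T ε γl kl (su l) l t s'')) s
        = deriv (fun c => pd m' (fun s'' => yl T ε γl kl (su l) l t s'')
            (Function.update s m c)) (s m) := rfl
      _ = 0 := by rw [heq, deriv_const]
  have hmix : ∀ m : Fin d, m ≠ l →
      pd m (pd l (fun s'' => yl T ε γl kl (su l) l t s'')) s = 0 := by
    intro m hm
    have heq : (fun c => pd l (fun s'' => yl T ε γl kl (su l) l t s'')
        (Function.update s m c)) = fun _ =>
          ((Real.sqrt (T + ε - t))⁻¹ *
            Real.exp (-γl * (Real.log (s l / (kl * su l)))^2 / (T + ε - t))) *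
          (-2*γl*Real.log (s l / (kl * su l))/((T + ε - t) * s l)) := by
      funext c
      rw [hpdl _ (by rw [Function.update_of_ne (Ne.symm hm)]; exact hsl)]
      rw [Function.update_of_ne (Ne.symm hm)]
    calc pd m (pd l (fun s'' => yl T ε γl kl (su l) l t s'')) s
        = deriv (fun c => pd l (fun s'' => yl T ε γl kl (su l) l t s'')
            (Function.update s m c)) (s m) := rfl
      _ = 0 := by rw [heq, deriv_const]
  have hll : pd l (pd l (fun s'' => yl T ε γl kl (su l) l t s'')) s
      = Y * ((4*γl^2*u^2 - 2*γl*τ + 2*γl*τ*u)/(τ^2*(s l)^2)) := by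
    have hev : (fun c => pd l (fun s'' => yl T ε γl kl (su l) l t s'')
        (Function.update s l c)) =ᶠ[nhds (s l)]
        (fun c => ((Real.sqrt (T + ε - t))⁻¹ *
            Real.exp (-γl * (Real.log (c / (kl * su l)))^2 / (T + ε - t))) *
          (-2*γl*Real.log (c / (kl * su l))/((T + ε - t) * c))) := by
      filter_upwards [Ioi_mem_nhds hsl] with c hc
      rw [hpdl _ (by rw [Function.update_self]; exact hc)]
      rw [Function.update_self]
    calc pd l (pd l (fun s'' => yl T ε γl kl (su l) l t s'')) s
        = deriv (fun c => pd l (fun s'' => yl T ε γl kl (su l) l t s'')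
            (Function.update s l c)) (s l) := rfl
      _ = _ := by
          rw [hev.deriv_eq]
          exact (hasDerivAt_Gd ((Real.sqrt (T + ε - t))⁻¹) γl (T + ε - t) (kl * su l)
            hτ' hK hsl).deriv
  -- sums
  have hsum1 : ∑ m, s m * pd m (fun s'' => yl T ε γl kl (su l) l t s'') s
      = s l * (Y * (-2*γl*u/(τ * s l))) := by
    rw [Finset.sum_eq_single l]
    · rw [hpdl s hsl]
    · intro m _ hm
      rw [hpd0 m hm s, mul_zero]
    · simp
  have hsum2 : ∑ m, ∑ m', amat σm i m m' * s m * s m' *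
        pd m (pd m' (fun s'' => yl T ε γl kl (su l) l t s'')) s
      = amat σm i l l * s l * s l *
          (Y * ((4*γl^2*u^2 - 2*γl*τ + 2*γl*τ*u)/(τ^2*(s l)^2))) := by
    rw [Finset.sum_eq_single l]
    · rw [Finset.sum_eq_single l]
      · rw [hll]
      · intro m' _ hm'
        rw [hpdinner l m' hm', mul_zero]
      · simp
    · intro m _ hm
      apply Finset.sum_eq_zero
      intro m' _
      by_cases hm' : m' = l
      · subst hm'
        rw [hmix m hm, mul_zero]
      · rw [hpdinner m m' hm', mul_zero]
    · simp
  have hΛs : ∑ j, Λ i j * yl T ε γl kl (su l) l t s = 0 := by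
    rw [← Finset.sum_mul, hΛ2 i, zero_mul]
  have hyval : yl T ε γl kl (su l) l t s = Y := rfl
  simp only [Lop]
  rw [hYt, hsum1, hsum2, hΛs, hyval]
  -- final algebra
  set a : ℝ := amat σm i l l with hadef
  clear_value τ u Y a
  clear hYt hsum1 hsum2 hΛs hyval hpd0 hpdl hpdinner hmix hll hs hσ hΛ1 hΛ2 hDl hamax hkl
    hτdef hudef hYdef hadef hu hsmem
  have hkey : Y * (1/(2*τ) - γl*u^2/τ^2)
      + (r i * (s l * (Y * (-2*γl*u/(τ * s l))))
        + 1/2 * (a * s l * s l * (Y * ((4*γl^2*u^2 - 2*γl*τ + 2*γl*τ*u)/(τ^2*(s l)^2))))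
        - r i * Y + 0)
      = Y * ((τ - 2*γl*u^2 + 4*a*γl^2*u^2 + 2*γl*u*τ*(a - 2*r i)
          - 2*a*γl*τ - 2*(r i)*τ^2) / (2*τ^2)) := by
    field_simp
    ring
  rw [hkey]
  clear hkey
  have hγa : 2 * γl * amax = 1 := by rw [hγl]; field_simp
  have h2 : 2*γl*τ*(u*(a - 2*r i)) ≤ -τ := by
    have h21 := mul_le_mul_of_nonneg_left hua (by positivity : (0:ℝ) ≤ 2*γl*τ)
    have h22 : 2*γl*τ*(-amax) = -τ := by
      rw [show 2*γl*τ*(-amax) = -(2*γl*amax*τ) by ring, hγa, one_mul]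
    linarith
  have h3 : 2*γl*u^2*(2*a*γl - 1) ≤ 0 := by
    apply mul_nonpos_of_nonneg_of_nonpos
      (mul_nonneg (by linarith : (0:ℝ) ≤ 2*γl) (sq_nonneg u))
    nlinarith [mul_le_mul_of_nonneg_left hale (by positivity : (0:ℝ) ≤ 2*γl), hγa]
  have h4 : 0 ≤ γl * a * τ := mul_nonneg (mul_nonneg hγpos.le hapos.le) hτ.le
  have h5 : 0 ≤ r i * τ^2 := mul_nonneg (hr i) (sq_nonneg τ)
  have hN : τ - 2*γl*u^2 + 4*a*γl^2*u^2 + 2*γl*u*τ*(a - 2*r i)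
      - 2*a*γl*τ - 2*(r i)*τ^2 ≤ 0 := by
    have hid : τ - 2*γl*u^2 + 4*a*γl^2*u^2 + 2*γl*u*τ*(a - 2*r i)
        - 2*a*γl*τ - 2*(r i)*τ^2
      = τ + 2*γl*u^2*(2*a*γl-1) + 2*γl*τ*(u*(a - 2*r i))
        - 2*(γl*a*τ) - 2*(r i*τ^2) := by ring
    rw [hid]
    linarith [h2, h3, h4, h5]
  apply mul_nonpos_of_nonneg_of_nonpos hYpos.le
  exact div_nonpos_of_nonpos_of_nonneg hN (by positivity)
end
end
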